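/- arXiv:2110.04365 — 6 statements merged into one kernel-verified Lean document; each statement's English description precedes it below -/
import Mathlib

section
/- Let U₁, U₂, U₃, V₁₂, V₁₃ be mutually independent random variables, where U₁, U₂, U₃ take values in a measurable space S and V₁₂, V₁₃ take values in a measurable space T, and let τ : S × S × T → ℝ be measurable. Set Z₁₂ := τ(U₁, U₂, V₁₂) and Z₁₃ := τ(U₁, U₃, V₁₃), and assume both are square-integrable. Then E[Z₁₂ · Z₁₃] = E[ E[Z₁₂ | σ(U₁)] · E[Z₁₃ | σ(U₁)] ]. In particular, if E[Z₁₂] = E[Z₁₃] = 0, then Cov(Z₁₂, Z₁₃) = Cov(E[Z₁₂ | σ(U₁)], E[Z₁₃ | σ(U₁)]). -/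
open MeasureTheory ProbabilityTheory

lemma comap_prodMk_eq_sup {Ω β γ : Type*} [mβ : MeasurableSpace β] [mγ : MeasurableSpace γ]
    (f : Ω → β) (g : Ω → γ) :
    MeasurableSpace.comap (fun ω => (f ω, g ω)) inferInstance
      = MeasurableSpace.comap f mβ ⊔ MeasurableSpace.comap g mγ := by
  have h : (inferInstance : MeasurableSpace (β × γ))
      = mβ.comap Prod.fst ⊔ mγ.comap Prod.snd := rfl
  rw [h, MeasurableSpace.comap_sup, MeasurableSpace.comap_comp, MeasurableSpace.comap_comp]
  rfl

/-- If `X` and `Y` are independent, the conditional expectation of `F (X, Y)` given `σ(X)`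
is obtained by integrating out `Y`. -/
lemma condexp_indepFun_integral {Ω S B : Type*} [MeasurableSpace Ω] [MeasurableSpace S]
    [MeasurableSpace B] (P : Measure Ω) [IsProbabilityMeasure P]
    (X : Ω → S) (Y : Ω → B) (hX : Measurable X) (hY : Measurable Y)
    (hXY : IndepFun X Y P) (F : S × B → ℝ) (hF : Measurable F)
    (hint : Integrable (fun ω => F (X ω, Y ω)) P) :
    P[(fun ω => F (X ω, Y ω)) | MeasurableSpace.comap X inferInstance]
      =ᵐ[P] fun ω => ∫ y, F (X ω, y) ∂(P.map Y) := by
  have hm : MeasurableSpace.comap X inferInstance ≤ ‹MeasurableSpace Ω› := hX.comap_le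
  haveI : IsProbabilityMeasure (P.map Y) := Measure.isProbabilityMeasure_map hY.aemeasurable
  haveI : IsProbabilityMeasure (P.map X) := Measure.isProbabilityMeasure_map hX.aemeasurable
  have hmap : P.map (fun ω => (X ω, Y ω)) = (P.map X).prod (P.map Y) :=
    (indepFun_iff_map_prod_eq_prod_map_map hX.aemeasurable hY.aemeasurable).mp hXY
  have hFprod : Integrable F ((P.map X).prod (P.map Y)) := by
    rw [← hmap]
    exact (integrable_map_measure hF.aestronglyMeasurable
      (hX.prodMk hY).aemeasurable).mpr hint
  set g : S → ℝ := fun x => ∫ y, F (x, y) ∂(P.map Y) with hg_def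
  have hg_sm : StronglyMeasurable g := hF.stronglyMeasurable.integral_prod_right'
  have hgX_int : Integrable (fun ω => g (X ω)) P :=
    (integrable_map_measure hg_sm.aestronglyMeasurable hX.aemeasurable).mp
      hFprod.integral_prod_left
  refine (ae_eq_condExp_of_forall_setIntegral_eq hm hint ?_ ?_ ?_).symm
  · exact fun s _ _ => hgX_int.integrableOn
  · rintro s ⟨A, hA, rfl⟩ -
    have h1 : ∫ ω in X ⁻¹' A, g (X ω) ∂P = ∫ x in A, g x ∂(P.map X) :=
      (setIntegral_map hA hg_sm.aestronglyMeasurable hX.aemeasurable).symm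
    have hpre : (fun ω => (X ω, Y ω)) ⁻¹' (A ×ˢ Set.univ) = X ⁻¹' A := by
      ext ω; simp
    have h2 : ∫ ω in X ⁻¹' A, F (X ω, Y ω) ∂P
        = ∫ p in A ×ˢ Set.univ, F p ∂((P.map X).prod (P.map Y)) := by
      rw [← hmap, setIntegral_map (hA.prod MeasurableSet.univ) hF.aestronglyMeasurable
        (hX.prodMk hY).aemeasurable, hpre]
    rw [h1, h2, setIntegral_prod _ hFprod.integrableOn]
    simp [hg_def]
  · exact StronglyMeasurable.aestronglyMeasurable
      (hg_sm.comp_measurable (measurable_iff_comap_le.mpr le_rfl))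

/-- For two dyadic entries sharing exactly one node shock under the AHK structure,
the expectation of the product equals the expectation of the product of the
conditional expectations given the shared shock; in particular the covariances agree. -/
theorem dyadic_shared_node_conditional_covariance
    {Ω S T : Type*} [MeasurableSpace Ω] [MeasurableSpace S] [MeasurableSpace T]
    (P : Measure Ω) [IsProbabilityMeasure P]
    (U₁ U₂ U₃ : Ω → S) (V₁₂ V₁₃ : Ω → T)
    (hU₁ : Measurable U₁) (hU₂ : Measurable U₂) (hU₃ : Measurable U₃)
    (hV₁₂ : Measurable V₁₂) (hV₁₃ : Measurable V₁₃)
    (hindep : iIndep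
      (![MeasurableSpace.comap U₁ inferInstance,
         MeasurableSpace.comap U₂ inferInstance,
         MeasurableSpace.comap U₃ inferInstance,
         MeasurableSpace.comap V₁₂ inferInstance,
         MeasurableSpace.comap V₁₃ inferInstance]) P)
    (τ : S → S → T → ℝ)
    (hτ : Measurable fun q : S × S × T => τ q.1 q.2.1 q.2.2)
    (Z₁₂ Z₁₃ : Ω → ℝ)
    (hZ₁₂ : Z₁₂ = fun ω => τ (U₁ ω) (U₂ ω) (V₁₂ ω))
    (hZ₁₃ : Z₁₃ = fun ω => τ (U₁ ω) (U₃ ω) (V₁₃ ω))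
    (hL₁₂ : MemLp Z₁₂ 2 P) (hL₁₃ : MemLp Z₁₃ 2 P) :
    (∫ ω, Z₁₂ ω * Z₁₃ ω ∂P
      = ∫ ω, (P[Z₁₂ | MeasurableSpace.comap U₁ inferInstance]) ω *
             (P[Z₁₃ | MeasurableSpace.comap U₁ inferInstance]) ω ∂P)
    ∧ ((∫ ω, Z₁₂ ω ∂P) = 0 → (∫ ω, Z₁₃ ω ∂P) = 0 →
        (∫ ω, Z₁₂ ω * Z₁₃ ω ∂P) - (∫ ω, Z₁₂ ω ∂P) * (∫ ω, Z₁₃ ω ∂P)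
          = (∫ ω, (P[Z₁₂ | MeasurableSpace.comap U₁ inferInstance]) ω *
                  (P[Z₁₃ | MeasurableSpace.comap U₁ inferInstance]) ω ∂P)
            - (∫ ω, (P[Z₁₂ | MeasurableSpace.comap U₁ inferInstance]) ω ∂P) *
              (∫ ω, (P[Z₁₃ | MeasurableSpace.comap U₁ inferInstance]) ω ∂P)) := by
  subst hZ₁₂ hZ₁₃
  set m5 : Fin 5 → MeasurableSpace Ω :=
    ![MeasurableSpace.comap U₁ inferInstance,
      MeasurableSpace.comap U₂ inferInstance,
      MeasurableSpace.comap U₃ inferInstance,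
      MeasurableSpace.comap V₁₂ inferInstance,
      MeasurableSpace.comap V₁₃ inferInstance] with hm5
  have h_le : ∀ i, m5 i ≤ ‹MeasurableSpace Ω› := by
    intro i
    fin_cases i
    · exact hU₁.comap_le
    · exact hU₂.comap_le
    · exact hU₃.comap_le
    · exact hV₁₂.comap_le
    · exact hV₁₃.comap_le
  set X : Ω → S := U₁ with hX_def
  set Y : Ω → S × T := fun ω => (U₂ ω, V₁₂ ω) with hY_def
  set Y' : Ω → S × T := fun ω => (U₃ ω, V₁₃ ω) with hY'_def
  set W : Ω → (S × T) × (S × T) := fun ω => (Y ω, Y' ω) with hW_def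
  have hX : Measurable X := hU₁
  have hY : Measurable Y := hU₂.prodMk hV₁₂
  have hY' : Measurable Y' := hU₃.prodMk hV₁₃
  have hW : Measurable W := hY.prodMk hY'
  have hm : MeasurableSpace.comap U₁ inferInstance ≤ ‹MeasurableSpace Ω› := hU₁.comap_le
  -- independence of X and W
  have hXW : IndepFun X W P := by
    have h0 : Indep (⨆ i ∈ ({0} : Set (Fin 5)), m5 i)
        (⨆ i ∈ ({1, 2, 3, 4} : Set (Fin 5)), m5 i) P :=
      indep_iSup_of_disjoint h_le hindep (by simp [Set.disjoint_left])
    rw [IndepFun_iff_Indep]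
    refine indep_of_indep_of_le_right (indep_of_indep_of_le_left h0 ?_) ?_
    · simp only [Set.mem_singleton_iff, iSup_iSup_eq_left]
      exact le_of_eq rfl
    · rw [hW_def, hY_def, hY'_def, comap_prodMk_eq_sup, comap_prodMk_eq_sup,
        comap_prodMk_eq_sup]
      have h1 : m5 1 ≤ ⨆ i ∈ ({1, 2, 3, 4} : Set (Fin 5)), m5 i :=
        le_iSup₂ (f := fun (i : Fin 5) (_ : i ∈ ({1, 2, 3, 4} : Set (Fin 5))) => m5 i) 1 (by simp)
      have h2 : m5 2 ≤ ⨆ i ∈ ({1, 2, 3, 4} : Set (Fin 5)), m5 i :=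
        le_iSup₂ (f := fun (i : Fin 5) (_ : i ∈ ({1, 2, 3, 4} : Set (Fin 5))) => m5 i) 2 (by simp)
      have h3 : m5 3 ≤ ⨆ i ∈ ({1, 2, 3, 4} : Set (Fin 5)), m5 i :=
        le_iSup₂ (f := fun (i : Fin 5) (_ : i ∈ ({1, 2, 3, 4} : Set (Fin 5))) => m5 i) 3 (by simp)
      have h4 : m5 4 ≤ ⨆ i ∈ ({1, 2, 3, 4} : Set (Fin 5)), m5 i :=
        le_iSup₂ (f := fun (i : Fin 5) (_ : i ∈ ({1, 2, 3, 4} : Set (Fin 5))) => m5 i) 4 (by simp)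
      exact sup_le (sup_le h1 h3) (sup_le h2 h4)
  -- independence of Y and Y'
  have hYY' : IndepFun Y Y' P := by
    have h0 : Indep (⨆ i ∈ ({1, 3} : Set (Fin 5)), m5 i)
        (⨆ i ∈ ({2, 4} : Set (Fin 5)), m5 i) P :=
      indep_iSup_of_disjoint h_le hindep (by simp [Set.disjoint_left])
    rw [IndepFun_iff_Indep]
    refine indep_of_indep_of_le_right (indep_of_indep_of_le_left h0 ?_) ?_
    · rw [hY_def, comap_prodMk_eq_sup]
      exact sup_le
        (le_iSup₂ (f := fun (i : Fin 5) (_ : i ∈ ({1, 3} : Set (Fin 5))) => m5 i) 1 (by simp))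
        (le_iSup₂ (f := fun (i : Fin 5) (_ : i ∈ ({1, 3} : Set (Fin 5))) => m5 i) 3 (by simp))
    · rw [hY'_def, comap_prodMk_eq_sup]
      exact sup_le
        (le_iSup₂ (f := fun (i : Fin 5) (_ : i ∈ ({2, 4} : Set (Fin 5))) => m5 i) 2 (by simp))
        (le_iSup₂ (f := fun (i : Fin 5) (_ : i ∈ ({2, 4} : Set (Fin 5))) => m5 i) 4 (by simp))
  -- independence of X and Y, X and Y'
  have hXY : IndepFun X Y P := hXW.comp measurable_id measurable_fst
  have hXY' : IndepFun X Y' P := hXW.comp measurable_id measurable_snd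
  haveI : IsProbabilityMeasure (P.map X) := Measure.isProbabilityMeasure_map hX.aemeasurable
  haveI : IsProbabilityMeasure (P.map Y) := Measure.isProbabilityMeasure_map hY.aemeasurable
  haveI : IsProbabilityMeasure (P.map Y') := Measure.isProbabilityMeasure_map hY'.aemeasurable
  -- the kernel function
  set F : S × (S × T) → ℝ := fun p => τ p.1 p.2.1 p.2.2 with hF_def
  have hF : Measurable F := hτ
  set g : S → ℝ := fun x => ∫ y, F (x, y) ∂(P.map Y) with hg_def
  set h : S → ℝ := fun x => ∫ y, F (x, y) ∂(P.map Y') with hh_def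
  have hg_sm : StronglyMeasurable g := hF.stronglyMeasurable.integral_prod_right'
  have hh_sm : StronglyMeasurable h := hF.stronglyMeasurable.integral_prod_right'
  have hint₁₂ : Integrable (fun ω => τ (U₁ ω) (U₂ ω) (V₁₂ ω)) P := hL₁₂.integrable one_le_two
  have hint₁₃ : Integrable (fun ω => τ (U₁ ω) (U₃ ω) (V₁₃ ω)) P := hL₁₃.integrable one_le_two
  -- conditional expectations
  have hcond₁₂ : P[(fun ω => τ (U₁ ω) (U₂ ω) (V₁₂ ω)) | MeasurableSpace.comap U₁ inferInstance]
      =ᵐ[P] fun ω => g (X ω) :=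
    condexp_indepFun_integral P X Y hX hY hXY F hF hint₁₂
  have hcond₁₃ : P[(fun ω => τ (U₁ ω) (U₃ ω) (V₁₃ ω)) | MeasurableSpace.comap U₁ inferInstance]
      =ᵐ[P] fun ω => h (X ω) :=
    condexp_indepFun_integral P X Y' hX hY' hXY' F hF hint₁₃
  -- product laws
  have hmapW : P.map W = (P.map Y).prod (P.map Y') :=
    (indepFun_iff_map_prod_eq_prod_map_map hY.aemeasurable hY'.aemeasurable).mp hYY'
  have hmapXW : P.map (fun ω => (X ω, W ω)) = (P.map X).prod ((P.map Y).prod (P.map Y')) := by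
    rw [← hmapW]
    exact (indepFun_iff_map_prod_eq_prod_map_map hX.aemeasurable hW.aemeasurable).mp hXW
  -- integrability of the product
  have hInt : Integrable (fun ω => τ (U₁ ω) (U₂ ω) (V₁₂ ω) * τ (U₁ ω) (U₃ ω) (V₁₃ ω)) P := by
    have := memLp_one_iff_integrable.mp
      (hL₁₃.smul (φ := fun ω => τ (U₁ ω) (U₂ ω) (V₁₂ ω)) hL₁₂ (r := 1) (hpqr := ⟨by simp [ENNReal.inv_two_add_inv_two]⟩))
    exact this
  set Φ : S × ((S × T) × (S × T)) → ℝ :=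
    fun p => τ p.1 p.2.1.1 p.2.1.2 * τ p.1 p.2.2.1 p.2.2.2 with hΦ_def
  have hΦ : Measurable Φ := by
    apply Measurable.mul
    · exact hτ.comp (show Measurable fun p : S × ((S × T) × (S × T)) =>
        (p.1, p.2.1.1, p.2.1.2) from by fun_prop)
    · exact hτ.comp (show Measurable fun p : S × ((S × T) × (S × T)) =>
        (p.1, p.2.2.1, p.2.2.2) from by fun_prop)
  have hΦint : Integrable Φ ((P.map X).prod ((P.map Y).prod (P.map Y'))) := by
    rw [← hmapXW]
    exact (integrable_map_measure hΦ.aestronglyMeasurable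
      (hX.prodMk hW).aemeasurable).mpr hInt
  -- main identity
  have hmain : ∫ ω, τ (U₁ ω) (U₂ ω) (V₁₂ ω) * τ (U₁ ω) (U₃ ω) (V₁₃ ω) ∂P
      = ∫ x, g x * h x ∂(P.map X) := by
    calc ∫ ω, τ (U₁ ω) (U₂ ω) (V₁₂ ω) * τ (U₁ ω) (U₃ ω) (V₁₃ ω) ∂P
        = ∫ p, Φ p ∂((P.map X).prod ((P.map Y).prod (P.map Y'))) := by
          rw [← hmapXW, integral_map (hX.prodMk hW).aemeasurable hΦ.aestronglyMeasurable]
      _ = ∫ x, ∫ w, Φ (x, w) ∂((P.map Y).prod (P.map Y')) ∂(P.map X) := integral_prod Φ hΦint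
      _ = ∫ x, g x * h x ∂(P.map X) := by
          refine integral_congr_ae (Filter.Eventually.of_forall fun x => ?_)
          exact integral_prod_mul (fun y : S × T => τ x y.1 y.2) (fun y : S × T => τ x y.1 y.2)
  have hRHS : ∫ ω, (P[(fun ω => τ (U₁ ω) (U₂ ω) (V₁₂ ω)) |
        MeasurableSpace.comap U₁ inferInstance]) ω *
        (P[(fun ω => τ (U₁ ω) (U₃ ω) (V₁₃ ω)) | MeasurableSpace.comap U₁ inferInstance]) ω ∂P
      = ∫ x, g x * h x ∂(P.map X) := by
    refine (integral_congr_ae (hcond₁₂.mul hcond₁₃)).trans ?_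
    exact (integral_map hX.aemeasurable (hg_sm.mul hh_sm).aestronglyMeasurable).symm
  have hpart1 : ∫ ω, τ (U₁ ω) (U₂ ω) (V₁₂ ω) * τ (U₁ ω) (U₃ ω) (V₁₃ ω) ∂P
      = ∫ ω, (P[(fun ω => τ (U₁ ω) (U₂ ω) (V₁₂ ω)) |
          MeasurableSpace.comap U₁ inferInstance]) ω *
        (P[(fun ω => τ (U₁ ω) (U₃ ω) (V₁₃ ω)) |
          MeasurableSpace.comap U₁ inferInstance]) ω ∂P := by
    rw [hmain, hRHS]
  refine ⟨hpart1, fun h12 h13 => ?_⟩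
  have e1 : ∫ ω, (P[(fun ω => τ (U₁ ω) (U₂ ω) (V₁₂ ω)) |
      MeasurableSpace.comap U₁ inferInstance]) ω ∂P = 0 := by
    rw [integral_condExp hm]; exact h12
  have e2 : ∫ ω, (P[(fun ω => τ (U₁ ω) (U₃ ω) (V₁₃ ω)) |
      MeasurableSpace.comap U₁ inferInstance]) ω ∂P = 0 := by
    rw [integral_condExp hm]; exact h13
  rw [h12, h13, e1, e2, hpart1]
end

section
/- In the AHK setup on n ≥ 3 nodes, assume that E[Z₁₂] = 0 and E[Z₁₂²] < ∞. Then Var( Σ_{(i,j): i≠j} Z_{ij} ) = n(n−1)(n−2)·( E[Z₁₂Z₁₃] + E[Z₁₂Z₃₁] + E[Z₂₁Z₁₃] + E[Z₂₁Z₃₁] ) + n(n−1)·( E[Z₁₂²] + E[Z₁₂Z₂₁] ). -/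
open MeasureTheory ProbabilityTheory

set_option linter.unusedSectionVars false

section Aux

variable {Ω ι : Type*} [MeasurableSpace Ω] {P : Measure Ω} [IsProbabilityMeasure P]
  {β : ι → Type*} [mβ : ∀ i, MeasurableSpace (β i)] {f : ∀ i, Ω → β i}

lemma aux_indep_head [DecidableEq ι] {γ : Type*} [MeasurableSpace γ]
    (h : iIndepFun f P) (hm : ∀ i, Measurable (f i))
    (a : ι) (s : Finset ι) (ha : a ∉ s)
    (g : (∀ x : s, β x) → γ) (hg : Measurable g) :
    IndepFun (f a) (fun ω => g (fun x => f x ω)) P := by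
  have h1 := h.indepFun_finset {a} s (Finset.disjoint_singleton_left.mpr ha) hm
  have h2 : Measurable
      (fun v : (∀ x : ({a} : Finset ι), β x) => v ⟨a, Finset.mem_singleton_self a⟩) :=
    measurable_pi_apply _
  exact h1.comp h2 hg

lemma aux_map2 (h : iIndepFun f P) (hm : ∀ i, Measurable (f i)) {a b : ι} (hab : a ≠ b) :
    P.map (fun ω => (f a ω, f b ω)) = (P.map (f a)).prod (P.map (f b)) :=
  (indepFun_iff_map_prod_eq_prod_map_map (hm a).aemeasurable (hm b).aemeasurable).mp
    (h.indepFun hab)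

lemma aux_map3 [DecidableEq ι] (h : iIndepFun f P) (hm : ∀ i, Measurable (f i))
    {a b c : ι} (hab : a ≠ b) (hac : a ≠ c) (hbc : b ≠ c) :
    P.map (fun ω => (f a ω, f b ω, f c ω))
      = (P.map (f a)).prod ((P.map (f b)).prod (P.map (f c))) := by
  have key : IndepFun (f a) (fun ω => (f b ω, f c ω)) P := by
    exact aux_indep_head h hm a {b, c} (by simp [hab, hac])
      (fun v => (v ⟨b, by simp⟩, v ⟨c, by simp⟩))
      ((measurable_pi_apply _).prodMk (measurable_pi_apply _))
  have := (indepFun_iff_map_prod_eq_prod_map_map (hm a).aemeasurable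
      ((hm b).prodMk (hm c)).aemeasurable).mp key
  rw [this, aux_map2 h hm hbc]

lemma aux_map4 [DecidableEq ι] (h : iIndepFun f P) (hm : ∀ i, Measurable (f i))
    {a b c d : ι} (hab : a ≠ b) (hac : a ≠ c) (had : a ≠ d)
    (hbc : b ≠ c) (hbd : b ≠ d) (hcd : c ≠ d) :
    P.map (fun ω => (f a ω, f b ω, f c ω, f d ω))
      = (P.map (f a)).prod ((P.map (f b)).prod ((P.map (f c)).prod (P.map (f d)))) := by
  have key : IndepFun (f a) (fun ω => (f b ω, f c ω, f d ω)) P := by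
    exact aux_indep_head h hm a {b, c, d} (by simp [hab, hac, had])
      (fun v => (v ⟨b, by simp⟩, v ⟨c, by simp⟩, v ⟨d, by simp⟩))
      ((measurable_pi_apply _).prodMk
        ((measurable_pi_apply _).prodMk (measurable_pi_apply _)))
  have := (indepFun_iff_map_prod_eq_prod_map_map (hm a).aemeasurable
      ((hm b).prodMk ((hm c).prodMk (hm d))).aemeasurable).mp key
  rw [this, aux_map3 h hm hbc hbd hcd]

lemma aux_map5 [DecidableEq ι] (h : iIndepFun f P) (hm : ∀ i, Measurable (f i))
    {a b c d e : ι} (hab : a ≠ b) (hac : a ≠ c) (had : a ≠ d) (hae : a ≠ e)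
    (hbc : b ≠ c) (hbd : b ≠ d) (hbe : b ≠ e) (hcd : c ≠ d) (hce : c ≠ e) (hde : d ≠ e) :
    P.map (fun ω => (f a ω, f b ω, f c ω, f d ω, f e ω))
      = (P.map (f a)).prod ((P.map (f b)).prod ((P.map (f c)).prod
          ((P.map (f d)).prod (P.map (f e))))) := by
  have key : IndepFun (f a) (fun ω => (f b ω, f c ω, f d ω, f e ω)) P := by
    exact aux_indep_head h hm a {b, c, d, e} (by simp [hab, hac, had, hae])
      (fun v => (v ⟨b, by simp⟩, v ⟨c, by simp⟩, v ⟨d, by simp⟩, v ⟨e, by simp⟩))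
      ((measurable_pi_apply _).prodMk ((measurable_pi_apply _).prodMk
        ((measurable_pi_apply _).prodMk (measurable_pi_apply _))))
  have := (indepFun_iff_map_prod_eq_prod_map_map (hm a).aemeasurable
      ((hm b).prodMk ((hm c).prodMk ((hm d).prodMk (hm e)))).aemeasurable).mp key
  rw [this, aux_map4 h hm hbc hbd hbe hcd hce hde]

end Aux

section AHK

universe u v w

/-- Index-dependent codomain for the combined AHK family. -/
def ahkβ (S : Type u) (T : Type v) (n : ℕ) :
    (Fin n ⊕ {e : Sym2 (Fin n) // ¬ e.IsDiag}) → Type (max u v) :=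
  Sum.elim (fun _ => ULift.{v} S) (fun _ => ULift.{u} T)

instance ahkβ.instMS {S : Type u} {T : Type v} [MeasurableSpace S] [MeasurableSpace T] {n : ℕ}
    (x : Fin n ⊕ {e : Sym2 (Fin n) // ¬ e.IsDiag}) : MeasurableSpace (ahkβ S T n x) :=
  match x with
  | .inl _ => (inferInstance : MeasurableSpace (ULift S))
  | .inr _ => (inferInstance : MeasurableSpace (ULift T))

/-- The combined AHK family. -/
def ahkf {Ω : Type w} {S : Type u} {T : Type v} {n : ℕ} (U : Fin n → Ω → S)
    (V : {e : Sym2 (Fin n) // ¬ e.IsDiag} → Ω → T) :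
    ∀ x : (Fin n ⊕ {e : Sym2 (Fin n) // ¬ e.IsDiag}), Ω → ahkβ S T n x :=
  fun x => match x with
  | .inl i => fun ω => ULift.up (U i ω)
  | .inr e => fun ω => ULift.up (V e ω)

lemma ulift_ms_eq {α : Type*} [m : MeasurableSpace α] :
    (ULift.instMeasurableSpace : MeasurableSpace (ULift α)) = m.comap ULift.down := by
  refine MeasurableSpace.ext fun s => ?_
  constructor
  · intro h
    exact ⟨ULift.up ⁻¹' s, h, rfl⟩
  · rintro ⟨t, ht, rfl⟩
    exact ht

end AHK

/-- Exact variance formula for a sum of a mean-zero jointly exchangeable dissociated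
dyadic array in Aldous–Hoover–Kallenberg (AHK) form. -/
theorem dyadic_sum_variance_formula
    {Ω S T : Type*} [MeasurableSpace Ω] [MeasurableSpace S] [MeasurableSpace T]
    (P : Measure Ω) [IsProbabilityMeasure P]
    {n : ℕ} (hn : 3 ≤ n)
    (U : Fin n → Ω → S)
    (V : {e : Sym2 (Fin n) // ¬ e.IsDiag} → Ω → T)
    (hU : ∀ i, Measurable (U i)) (hV : ∀ e, Measurable (V e))
    (hUid : ∀ i j, IdentDistrib (U i) (U j) P P)
    (hVid : ∀ e e', IdentDistrib (V e) (V e') P P)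
    (hindep : iIndep
      (Sum.elim (fun i => MeasurableSpace.comap (U i) inferInstance)
                (fun e => MeasurableSpace.comap (V e) inferInstance)
        : Fin n ⊕ {e : Sym2 (Fin n) // ¬ e.IsDiag} → MeasurableSpace Ω) P)
    (τ : S → S → T → ℝ)
    (hτ : Measurable fun q : S × S × T => τ q.1 q.2.1 q.2.2)
    (Z : Fin n → Fin n → Ω → ℝ)
    (hZ : ∀ i j : Fin n, ∀ hij : i ≠ j,
      Z i j = fun ω => τ (U i ω) (U j ω)
        (V ⟨Sym2.mk i j, mt Sym2.mk_isDiag_iff.mp hij⟩ ω))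
    (i0 i1 i2 : Fin n)
    (h0 : (i0 : ℕ) = 0) (h1 : (i1 : ℕ) = 1) (h2 : (i2 : ℕ) = 2)
    (hmean : ∫ ω, Z i0 i1 ω ∂P = 0)
    (hL2 : MemLp (Z i0 i1) 2 P) :
    variance (fun ω => ∑ i : Fin n, ∑ j : Fin n, if i ≠ j then Z i j ω else 0) P
      = (n : ℝ) * ((n : ℝ) - 1) * ((n : ℝ) - 2) *
          ((∫ ω, Z i0 i1 ω * Z i0 i2 ω ∂P) + (∫ ω, Z i0 i1 ω * Z i2 i0 ω ∂P)
            + (∫ ω, Z i1 i0 ω * Z i0 i2 ω ∂P) + (∫ ω, Z i1 i0 ω * Z i2 i0 ω ∂P))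
        + (n : ℝ) * ((n : ℝ) - 1) *
          ((∫ ω, (Z i0 i1 ω) ^ 2 ∂P) + (∫ ω, Z i0 i1 ω * Z i1 i0 ω ∂P)) := by
  classical
  -- basic distinctness
  have h01 : i0 ≠ i1 := by intro h; rw [h] at h0; omega
  have h02 : i0 ≠ i2 := by intro h; rw [h] at h0; omega
  have h12 : i1 ≠ i2 := by intro h; rw [h] at h1; omega
  have h10 : i1 ≠ i0 := h01.symm
  have h20 : i2 ≠ i0 := h02.symm
  have h21 : i2 ≠ i1 := h12.symm
  -- the combined independent family
  set f := ahkf U V with hf_def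
  have hm : ∀ x, Measurable (f x) := by
    rintro (i | e)
    · exact measurable_up.comp (hU i)
    · exact measurable_up.comp (hV e)
  have hiid : iIndepFun f P := by
    show iIndep _ P
    have hfam : (fun x => MeasurableSpace.comap (f x) (ahkβ.instMS x))
        = (Sum.elim (fun i => MeasurableSpace.comap (U i) inferInstance)
            (fun e => MeasurableSpace.comap (V e) inferInstance)
          : Fin n ⊕ {e : Sym2 (Fin n) // ¬ e.IsDiag} → MeasurableSpace Ω) := by
      funext x
      cases x with
      | inl i =>
        show MeasurableSpace.comap (fun ω => ULift.up (U i ω))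
            (ULift.instMeasurableSpace) = _
        rw [ulift_ms_eq, MeasurableSpace.comap_comp]
        rfl
      | inr e =>
        show MeasurableSpace.comap (fun ω => ULift.up (V e ω))
            (ULift.instMeasurableSpace) = _
        rw [ulift_ms_eq, MeasurableSpace.comap_comp]
        rfl
    rw [hfam]
    exact hindep
  -- canonical edges
  set e01 : {e : Sym2 (Fin n) // ¬ e.IsDiag} :=
    ⟨Sym2.mk i0 i1, mt Sym2.mk_isDiag_iff.mp h01⟩ with he01_def
  set e02 : {e : Sym2 (Fin n) // ¬ e.IsDiag} :=
    ⟨Sym2.mk i0 i2, mt Sym2.mk_isDiag_iff.mp h02⟩ with he02_def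
  have edgne : ∀ (i j k l : Fin n) (hij : i ≠ j) (hkl : k ≠ l),
      ¬((i = k ∧ j = l) ∨ (i = l ∧ j = k)) →
      (⟨Sym2.mk i j, mt Sym2.mk_isDiag_iff.mp hij⟩ : {e : Sym2 (Fin n) // ¬ e.IsDiag})
        ≠ ⟨Sym2.mk k l, mt Sym2.mk_isDiag_iff.mp hkl⟩ := by
    intro i j k l hij hkl hno h
    exact hno (Sym2.eq_iff.mp (congrArg Subtype.val h))
  have he0102 : e01 ≠ e02 :=
    edgne _ _ _ _ h01 h02 (by rintro (⟨-, h⟩ | ⟨h, -⟩); exacts [h12 h, h02 h])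
  -- marginal identities
  have hUm : ∀ a : Fin n, P.map (f (Sum.inl a)) = P.map (f (Sum.inl i0)) := fun a =>
    ((hUid a i0).comp measurable_up).map_eq
  have hVm : ∀ e, P.map (f (Sum.inr e)) = P.map (f (Sum.inr e01)) := fun e =>
    ((hVid e e01).comp measurable_up).map_eq
  -- identically distributed triples
  have idd3 : ∀ (a b : Fin n), a ≠ b → ∀ (e : {e : Sym2 (Fin n) // ¬ e.IsDiag}),
      IdentDistrib (fun ω => (f (Sum.inl a) ω, f (Sum.inl b) ω, f (Sum.inr e) ω))
        (fun ω => (f (Sum.inl i0) ω, f (Sum.inl i1) ω, f (Sum.inr e01) ω)) P P := by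
    intro a b hab e
    refine ⟨((hm _).prodMk ((hm _).prodMk (hm _))).aemeasurable,
            ((hm _).prodMk ((hm _).prodMk (hm _))).aemeasurable, ?_⟩
    have m1 := aux_map3 (P := P) hiid hm (a := Sum.inl a) (b := Sum.inl b) (c := Sum.inr e)
      (by simp [hab]) (by simp) (by simp)
    have m2 := aux_map3 (P := P) hiid hm (a := Sum.inl i0) (b := Sum.inl i1) (c := Sum.inr e01)
      (by simp [h01]) (by simp) (by simp)
    rw [m1]; erw [m2]; rw [hUm a, hUm b, hUm i1, hVm e]; exact rfl
  -- identically distributed quintuples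
  have idd5 : ∀ (a b c : Fin n), a ≠ b → a ≠ c → b ≠ c →
      ∀ (e1 e2 : {e : Sym2 (Fin n) // ¬ e.IsDiag}), e1 ≠ e2 →
      IdentDistrib
        (fun ω => (f (Sum.inl a) ω, f (Sum.inl b) ω, f (Sum.inl c) ω,
          f (Sum.inr e1) ω, f (Sum.inr e2) ω))
        (fun ω => (f (Sum.inl i0) ω, f (Sum.inl i1) ω, f (Sum.inl i2) ω,
          f (Sum.inr e01) ω, f (Sum.inr e02) ω)) P P := by
    intro a b c hab hac hbc e1 e2 he
    refine ⟨((hm _).prodMk ((hm _).prodMk ((hm _).prodMk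
        ((hm _).prodMk (hm _))))).aemeasurable,
      ((hm _).prodMk ((hm _).prodMk ((hm _).prodMk
        ((hm _).prodMk (hm _))))).aemeasurable, ?_⟩
    have m1 := aux_map5 (P := P) hiid hm (a := Sum.inl a) (b := Sum.inl b) (c := Sum.inl c)
      (d := Sum.inr e1) (e := Sum.inr e2)
      (by simp [hab]) (by simp [hac]) (by simp) (by simp)
      (by simp [hbc]) (by simp) (by simp) (by simp) (by simp) (by simp [he])
    have m2 := aux_map5 (P := P) hiid hm (a := Sum.inl i0) (b := Sum.inl i1) (c := Sum.inl i2)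
      (d := Sum.inr e01) (e := Sum.inr e02)
      (by simp [h01]) (by simp [h02]) (by simp) (by simp)
      (by simp [h12]) (by simp) (by simp) (by simp) (by simp) (by simp [he0102])
    rw [m1]; erw [m2]; rw [hUm a, hUm b, hUm c, hUm i1, hUm i2, hVm e1, hVm e2, hVm e02]; exact rfl
  -- projection measurability
  have hd3 : Measurable (fun q : ULift S × ULift S × ULift T =>
      ((q.1.down, q.2.1.down, q.2.2.down) : S × S × T)) :=
    (measurable_down.comp measurable_fst).prodMk
      ((measurable_down.comp (measurable_fst.comp measurable_snd)).prodMk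
        (measurable_down.comp (measurable_snd.comp measurable_snd)))
  have hd5 : Measurable (fun q : ULift S × ULift S × ULift S × ULift T × ULift T =>
      ((q.1.down, q.2.1.down, q.2.2.1.down, q.2.2.2.1.down, q.2.2.2.2.down) :
        S × S × S × T × T)) := by
    refine (measurable_down.comp measurable_fst).prodMk ?_
    refine (measurable_down.comp (measurable_fst.comp measurable_snd)).prodMk ?_
    refine (measurable_down.comp (measurable_fst.comp
      (measurable_snd.comp measurable_snd))).prodMk ?_
    refine (measurable_down.comp (measurable_fst.comp (measurable_snd.comp
      (measurable_snd.comp measurable_snd)))).prodMk ?_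
    exact measurable_down.comp (measurable_snd.comp (measurable_snd.comp
      (measurable_snd.comp measurable_snd)))
  -- expectation transfer for triples
  have int3 : ∀ (g : S × S × T → ℝ), Measurable g → ∀ (a b : Fin n), a ≠ b →
      ∀ (e : {e : Sym2 (Fin n) // ¬ e.IsDiag}),
      ∫ ω, g (U a ω, U b ω, V e ω) ∂P = ∫ ω, g (U i0 ω, U i1 ω, V e01 ω) ∂P := by
    intro g hg a b hab e
    exact ((idd3 a b hab e).comp (hg.comp hd3)).integral_eq
  -- expectation transfer for quintuples
  have int5 : ∀ (g : S × S × S × T × T → ℝ), Measurable g →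
      ∀ (a b c : Fin n), a ≠ b → a ≠ c → b ≠ c →
      ∀ (e1 e2 : {e : Sym2 (Fin n) // ¬ e.IsDiag}), e1 ≠ e2 →
      ∫ ω, g (U a ω, U b ω, U c ω, V e1 ω, V e2 ω) ∂P
        = ∫ ω, g (U i0 ω, U i1 ω, U i2 ω, V e01 ω, V e02 ω) ∂P := by
    intro g hg a b c hab hac hbc e1 e2 he
    exact ((idd5 a b c hab hac hbc e1 e2 he).comp (hg.comp hd5)).integral_eq
  -- each Z i j is identically distributed to Z i0 i1
  have iddZ : ∀ (i j : Fin n) (hij : i ≠ j), IdentDistrib (Z i j) (Z i0 i1) P P := by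
    intro i j hij
    rw [hZ i j hij, hZ i0 i1 h01]
    exact (idd3 i j hij ⟨Sym2.mk i j, mt Sym2.mk_isDiag_iff.mp hij⟩).comp (hτ.comp hd3)
  have hZL2 : ∀ (i j : Fin n), i ≠ j → MemLp (Z i j) 2 P := fun i j hij =>
    (iddZ i j hij).memLp_iff.mpr hL2
  have hZint : ∀ (i j : Fin n), i ≠ j → Integrable (Z i j) P := fun i j hij =>
    (hZL2 i j hij).integrable one_le_two
  have hZmean : ∀ (i j : Fin n), i ≠ j → ∫ ω, Z i j ω ∂P = 0 := fun i j hij =>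
    ((iddZ i j hij).integral_eq).trans hmean
  -- edge symmetry for V
  have hVsym : ∀ (i j : Fin n) (hij : i ≠ j),
      V ⟨Sym2.mk j i, mt Sym2.mk_isDiag_iff.mp hij.symm⟩
        = V ⟨Sym2.mk i j, mt Sym2.mk_isDiag_iff.mp hij⟩ := fun i j hij =>
    congrArg V (Subtype.ext Sym2.eq_swap)
  -- projections
  have p5a : Measurable (fun q : S × S × S × T × T => ((q.1, q.2.1, q.2.2.2.1) : S × S × T)) :=
    by fun_prop
  have p5b : Measurable (fun q : S × S × S × T × T => ((q.1, q.2.2.1, q.2.2.2.2) : S × S × T)) :=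
    by fun_prop
  have p5c : Measurable (fun q : S × S × S × T × T => ((q.2.1, q.1, q.2.2.2.1) : S × S × T)) :=
    by fun_prop
  have p5d : Measurable (fun q : S × S × S × T × T => ((q.2.2.1, q.1, q.2.2.2.2) : S × S × T)) :=
    by fun_prop
  -- the six pattern expectations
  have KA : ∀ (i j : Fin n), i ≠ j →
      ∫ ω, Z i j ω * Z i j ω ∂P = ∫ ω, Z i0 i1 ω * Z i0 i1 ω ∂P := by
    intro i j hij
    simp only [hZ i j hij, hZ i0 i1 h01]
    exact int3 (fun q => τ q.1 q.2.1 q.2.2 * τ q.1 q.2.1 q.2.2) (hτ.mul hτ) i j hij _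
  have KB : ∀ (i j : Fin n), i ≠ j →
      ∫ ω, Z i j ω * Z j i ω ∂P = ∫ ω, Z i0 i1 ω * Z i1 i0 ω ∂P := by
    intro i j hij
    simp only [hZ i j hij, hZ j i hij.symm, hZ i0 i1 h01, hZ i1 i0 h10,
      hVsym i j hij, hVsym i0 i1 h01]
    exact int3 (fun q => τ q.1 q.2.1 q.2.2 * τ q.2.1 q.1 q.2.2)
      (hτ.mul (hτ.comp (by fun_prop : Measurable (fun q : S × S × T =>
        ((q.2.1, q.1, q.2.2) : S × S × T))))) i j hij _
  have KC1 : ∀ (i j l : Fin n), i ≠ j → i ≠ l → j ≠ l →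
      ∫ ω, Z i j ω * Z i l ω ∂P = ∫ ω, Z i0 i1 ω * Z i0 i2 ω ∂P := by
    intro i j l hij hil hjl
    simp only [hZ i j hij, hZ i l hil, hZ i0 i1 h01, hZ i0 i2 h02]
    exact int5 (fun q => τ q.1 q.2.1 q.2.2.2.1 * τ q.1 q.2.2.1 q.2.2.2.2)
      ((hτ.comp p5a).mul (hτ.comp p5b)) i j l hij hil hjl _ _
      (edgne i j i l hij hil (by rintro (⟨-, h⟩ | ⟨h, -⟩); exacts [hjl h, hil h]))
  have KC2 : ∀ (i j k : Fin n), i ≠ j → i ≠ k → j ≠ k →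
      ∫ ω, Z i j ω * Z k i ω ∂P = ∫ ω, Z i0 i1 ω * Z i2 i0 ω ∂P := by
    intro i j k hij hik hjk
    simp only [hZ i j hij, hZ k i hik.symm, hZ i0 i1 h01, hZ i2 i0 h20, hVsym i0 i2 h02]
    exact int5 (fun q => τ q.1 q.2.1 q.2.2.2.1 * τ q.2.2.1 q.1 q.2.2.2.2)
      ((hτ.comp p5a).mul (hτ.comp p5d)) i j k hij hik hjk _ _
      (edgne i j k i hij hik.symm (by rintro (⟨h, -⟩ | ⟨-, h⟩); exacts [hik h, hjk h]))
  have KC3 : ∀ (i j l : Fin n), i ≠ j → i ≠ l → j ≠ l →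
      ∫ ω, Z i j ω * Z j l ω ∂P = ∫ ω, Z i1 i0 ω * Z i0 i2 ω ∂P := by
    intro i j l hij hil hjl
    simp only [hZ i j hij, hZ j l hjl, hZ i1 i0 h10, hZ i0 i2 h02, hVsym i0 i1 h01]
    exact int5 (fun q => τ q.2.1 q.1 q.2.2.2.1 * τ q.1 q.2.2.1 q.2.2.2.2)
      ((hτ.comp p5c).mul (hτ.comp p5b)) j i l hij.symm hjl hil _ _
      (edgne i j j l hij hjl (by rintro (⟨h, -⟩ | ⟨h, -⟩); exacts [hij h, hil h]))
  have KC4 : ∀ (i j k : Fin n), i ≠ j → i ≠ k → j ≠ k →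
      ∫ ω, Z i j ω * Z k j ω ∂P = ∫ ω, Z i1 i0 ω * Z i2 i0 ω ∂P := by
    intro i j k hij hik hjk
    simp only [hZ i j hij, hZ k j (Ne.symm hjk), hZ i1 i0 h10, hZ i2 i0 h20,
      hVsym i0 i1 h01, hVsym i0 i2 h02]
    exact int5 (fun q => τ q.2.1 q.1 q.2.2.2.1 * τ q.2.2.1 q.1 q.2.2.2.2)
      ((hτ.comp p5c).mul (hτ.comp p5d)) j i k (Ne.symm hij) hjk hik _ _
      (edgne i j k j hij (Ne.symm hjk) (by rintro (⟨h, -⟩ | ⟨h, -⟩); exacts [hik h, hij h]))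
  -- disjoint pairs are independent, hence uncorrelated
  have Kdisj : ∀ (i j k l : Fin n), i ≠ j → k ≠ l → i ≠ k → i ≠ l → j ≠ k → j ≠ l →
      ∫ ω, Z i j ω * Z k l ω ∂P = 0 := by
    intro i j k l hij hkl hik hil hjk hjl
    have hedge : (⟨Sym2.mk i j, mt Sym2.mk_isDiag_iff.mp hij⟩ :
        {e : Sym2 (Fin n) // ¬ e.IsDiag}) ≠ ⟨Sym2.mk k l, mt Sym2.mk_isDiag_iff.mp hkl⟩ :=
      edgne i j k l hij hkl (by rintro (⟨h, -⟩ | ⟨h, -⟩); exacts [hik h, hil h])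
    have hdisj : Disjoint
        ({Sum.inl i, Sum.inl j, Sum.inr ⟨Sym2.mk i j, mt Sym2.mk_isDiag_iff.mp hij⟩} :
          Finset (Fin n ⊕ {e : Sym2 (Fin n) // ¬ e.IsDiag}))
        {Sum.inl k, Sum.inl l, Sum.inr ⟨Sym2.mk k l, mt Sym2.mk_isDiag_iff.mp hkl⟩} := by
      rw [Finset.disjoint_left]
      intro x hx1 hx2
      simp only [Finset.mem_insert, Finset.mem_singleton] at hx1 hx2
      rcases hx1 with rfl | rfl | rfl
      · rcases hx2 with h | h | h
        · exact hik (Sum.inl.inj h)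
        · exact hil (Sum.inl.inj h)
        · exact Sum.inl_ne_inr h
      · rcases hx2 with h | h | h
        · exact hjk (Sum.inl.inj h)
        · exact hjl (Sum.inl.inj h)
        · exact Sum.inl_ne_inr h
      · rcases hx2 with h | h | h
        · exact Sum.inr_ne_inl h
        · exact Sum.inr_ne_inl h
        · exact hedge (Sum.inr.inj h)
    have hg1 : Measurable (fun v : (∀ x : (({Sum.inl i, Sum.inl j,
        Sum.inr ⟨Sym2.mk i j, mt Sym2.mk_isDiag_iff.mp hij⟩} :
          Finset (Fin n ⊕ {e : Sym2 (Fin n) // ¬ e.IsDiag}))), ahkβ S T n x) =>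
        τ (v ⟨Sum.inl i, by simp⟩).down (v ⟨Sum.inl j, by simp⟩).down
          (v ⟨Sum.inr ⟨Sym2.mk i j, mt Sym2.mk_isDiag_iff.mp hij⟩, by simp⟩).down) :=
      hτ.comp (((measurable_down.comp (measurable_pi_apply _)).prodMk
        ((measurable_down.comp (measurable_pi_apply _)).prodMk
          (measurable_down.comp (measurable_pi_apply _)))))
    have hg2 : Measurable (fun v : (∀ x : (({Sum.inl k, Sum.inl l,
        Sum.inr ⟨Sym2.mk k l, mt Sym2.mk_isDiag_iff.mp hkl⟩} :
          Finset (Fin n ⊕ {e : Sym2 (Fin n) // ¬ e.IsDiag}))), ahkβ S T n x) =>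
        τ (v ⟨Sum.inl k, by simp⟩).down (v ⟨Sum.inl l, by simp⟩).down
          (v ⟨Sum.inr ⟨Sym2.mk k l, mt Sym2.mk_isDiag_iff.mp hkl⟩, by simp⟩).down) :=
      hτ.comp (((measurable_down.comp (measurable_pi_apply _)).prodMk
        ((measurable_down.comp (measurable_pi_apply _)).prodMk
          (measurable_down.comp (measurable_pi_apply _)))))
    have hind := (hiid.indepFun_finset _ _ hdisj hm).comp hg1 hg2
    have hind' : IndepFun (Z i j) (Z k l) P := by
      rw [hZ i j hij, hZ k l hkl]
      exact hind
    have := hind'.integral_mul_eq_mul_integral (hZint i j hij).aestronglyMeasurable (hZint k l hkl).aestronglyMeasurable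
    calc ∫ ω, Z i j ω * Z k l ω ∂P = (∫ ω, Z i j ω ∂P) * ∫ ω, Z k l ω ∂P := this
      _ = 0 := by rw [hZmean i j hij, hZmean k l hkl, mul_zero]
  -- the summand family
  set W : Fin n × Fin n → Ω → ℝ := fun p ω => if p.1 ≠ p.2 then Z p.1 p.2 ω else 0 with hW_def
  have hWmem : ∀ p, MemLp (W p) 2 P := by
    rintro ⟨i, j⟩
    by_cases h : i = j
    · have : W (i, j) = fun _ => (0 : ℝ) := by funext ω; simp [hW_def, h]
      rw [this]; exact memLp_const 0
    · have : W (i, j) = Z i j := by funext ω; simp [hW_def, h]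
      rw [this]; exact hZL2 i j h
  have hWint : ∀ p, Integrable (W p) P := fun p => (hWmem p).integrable one_le_two
  have hWprodint : ∀ p q, Integrable (fun ω => W p ω * W q ω) P := fun p q =>
    memLp_one_iff_integrable.mp ((hWmem q).smul (r := 1) (hWmem p))
  have hWmean : ∀ p, ∫ ω, W p ω ∂P = 0 := by
    rintro ⟨i, j⟩
    by_cases h : i = j
    · have : W (i, j) = fun _ => (0 : ℝ) := by funext ω; simp [hW_def, h]
      rw [this]; simp
    · have : W (i, j) = Z i j := by funext ω; simp [hW_def, h]
      rw [this]; exact hZmean i j h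
  -- the entrywise covariances
  have hentry : ∀ i j k l : Fin n, ∫ ω, W (i, j) ω * W (k, l) ω ∂P =
      (if l = j ∧ k = i ∧ i ≠ j then (∫ ω, Z i0 i1 ω * Z i0 i1 ω ∂P) else 0)
      + (if l = i ∧ k = j ∧ i ≠ j then (∫ ω, Z i0 i1 ω * Z i1 i0 ω ∂P) else 0)
      + (if k = i ∧ i ≠ j ∧ l ≠ i ∧ l ≠ j then (∫ ω, Z i0 i1 ω * Z i0 i2 ω ∂P) else 0)
      + (if l = i ∧ i ≠ j ∧ k ≠ i ∧ k ≠ j then (∫ ω, Z i0 i1 ω * Z i2 i0 ω ∂P) else 0)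
      + (if k = j ∧ i ≠ j ∧ l ≠ i ∧ l ≠ j then (∫ ω, Z i1 i0 ω * Z i0 i2 ω ∂P) else 0)
      + (if l = j ∧ i ≠ j ∧ k ≠ i ∧ k ≠ j then (∫ ω, Z i1 i0 ω * Z i2 i0 ω ∂P) else 0) := by
    intro i j k l
    by_cases hij : i = j
    · subst hij
      have hz : (fun ω => W (i, i) ω * W (k, l) ω) = fun _ => (0 : ℝ) := by
        funext ω; simp [hW_def]
      rw [hz, integral_zero]
      have c1 : ¬(l = i ∧ k = i ∧ i ≠ i) := by rintro ⟨-, -, h⟩; exact h rfl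
      have c3 : ¬(k = i ∧ i ≠ i ∧ l ≠ i ∧ l ≠ i) := by rintro ⟨-, h, -⟩; exact h rfl
      have c4 : ¬(l = i ∧ i ≠ i ∧ k ≠ i ∧ k ≠ i) := by rintro ⟨-, h, -⟩; exact h rfl
      simp only [if_neg c1, if_neg c3, if_neg c4, add_zero]
    · by_cases hkl : k = l
      · subst hkl
        have hz : (fun ω => W (i, j) ω * W (k, k) ω) = fun _ => (0 : ℝ) := by
          funext ω; simp [hW_def]
        rw [hz, integral_zero]
        have c1 : ¬(k = j ∧ k = i ∧ i ≠ j) := by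
          rintro ⟨hA, hB, hC⟩; exact hC (hB.symm.trans hA)
        have c2 : ¬(k = i ∧ k = j ∧ i ≠ j) := by
          rintro ⟨hA, hB, hC⟩; exact hC (hA.symm.trans hB)
        have c3 : ¬(k = i ∧ i ≠ j ∧ k ≠ i ∧ k ≠ j) := by rintro ⟨hA, -, hB, -⟩; exact hB hA
        have c5 : ¬(k = j ∧ i ≠ j ∧ k ≠ i ∧ k ≠ j) := by rintro ⟨hA, -, -, hB⟩; exact hB hA
        simp only [if_neg c1, if_neg c2, if_neg c3, if_neg c5, add_zero]
      · have w1 : W (i, j) = Z i j := by funext ω; simp [hW_def, hij]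
        have w2 : W (k, l) = Z k l := by funext ω; simp [hW_def, hkl]
        simp only [w1, w2]
        by_cases hik : i = k
        · subst hik
          by_cases hjl : j = l
          · subst hjl
            simp only [hij, Ne.symm hij, ne_eq, not_false_eq_true, and_self, and_true, true_and,
              not_true_eq_false, and_false, false_and, if_true, if_false, add_zero, zero_add,
              eq_self_iff_true]
            exact KA i j hij
          · simp only [hij, Ne.symm hij, hkl, Ne.symm hkl, hjl, Ne.symm hjl, ne_eq,
              not_false_eq_true, and_self, and_true, true_and, not_true_eq_false, and_false,
              false_and, if_true, if_false, add_zero, zero_add, eq_self_iff_true]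
            exact KC1 i j l hij hkl hjl
        · by_cases hil : i = l
          · subst hil
            by_cases hjk : j = k
            · subst hjk
              simp only [hij, Ne.symm hij, ne_eq, not_false_eq_true, and_self, and_true,
                true_and, not_true_eq_false, and_false, false_and, if_true, if_false, add_zero,
                zero_add, eq_self_iff_true]
              exact KB i j hij
            · simp only [hij, Ne.symm hij, hkl, hik, Ne.symm hik, hjk, Ne.symm hjk, ne_eq,
                not_false_eq_true, and_self, and_true, true_and, not_true_eq_false, and_false,
                false_and, if_true, if_false, add_zero, zero_add, eq_self_iff_true]
              exact KC2 i j k hij hik hjk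
          · by_cases hjk : j = k
            · subst hjk
              simp only [hij, Ne.symm hij, hil, Ne.symm hil, hkl, Ne.symm hkl, ne_eq,
                not_false_eq_true, and_self, and_true, true_and, not_true_eq_false, and_false,
                false_and, if_true, if_false, add_zero, zero_add, eq_self_iff_true]
              exact KC3 i j l hij hil hkl
            · by_cases hjl : j = l
              · subst hjl
                simp only [hij, Ne.symm hij, hik, Ne.symm hik, hkl, Ne.symm hkl, ne_eq,
                  not_false_eq_true, and_self, and_true, true_and, not_true_eq_false, and_false,
                  false_and, if_true, if_false, add_zero, zero_add, eq_self_iff_true]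
                exact KC4 i j k hij hik (Ne.symm hkl)
              · simp only [hij, hkl, hik, hil, hjk, hjl, Ne.symm hik, Ne.symm hil,
                  Ne.symm hjk, Ne.symm hjl, ne_eq, not_false_eq_true, and_self, and_true,
                  true_and, not_true_eq_false, and_false, false_and, if_true, if_false,
                  add_zero, zero_add, eq_self_iff_true]
                exact Kdisj i j k l hij hkl hik hil hjk hjl
  -- row sums
  have hsplit : ∀ i j : Fin n, (∑ k : Fin n, ∑ l : Fin n,
      ((if l = j ∧ k = i ∧ i ≠ j then (∫ ω, Z i0 i1 ω * Z i0 i1 ω ∂P) else 0)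
      + (if l = i ∧ k = j ∧ i ≠ j then (∫ ω, Z i0 i1 ω * Z i1 i0 ω ∂P) else 0)
      + (if k = i ∧ i ≠ j ∧ l ≠ i ∧ l ≠ j then (∫ ω, Z i0 i1 ω * Z i0 i2 ω ∂P) else 0)
      + (if l = i ∧ i ≠ j ∧ k ≠ i ∧ k ≠ j then (∫ ω, Z i0 i1 ω * Z i2 i0 ω ∂P) else 0)
      + (if k = j ∧ i ≠ j ∧ l ≠ i ∧ l ≠ j then (∫ ω, Z i1 i0 ω * Z i0 i2 ω ∂P) else 0)
      + (if l = j ∧ i ≠ j ∧ k ≠ i ∧ k ≠ j then (∫ ω, Z i1 i0 ω * Z i2 i0 ω ∂P) else 0)))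
      = if i ≠ j then ((∫ ω, Z i0 i1 ω * Z i0 i1 ω ∂P) + (∫ ω, Z i0 i1 ω * Z i1 i0 ω ∂P)
          + ((n:ℝ)-2) * (∫ ω, Z i0 i1 ω * Z i0 i2 ω ∂P) + ((n:ℝ)-2) * (∫ ω, Z i0 i1 ω * Z i2 i0 ω ∂P)
          + ((n:ℝ)-2) * (∫ ω, Z i1 i0 ω * Z i0 i2 ω ∂P) + ((n:ℝ)-2) * (∫ ω, Z i1 i0 ω * Z i2 i0 ω ∂P)) else 0 := by
    intro i j
    by_cases hij : i = j
    · subst hij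
      rw [if_neg (fun h => h rfl)]
      apply Finset.sum_eq_zero; intro k _
      apply Finset.sum_eq_zero; intro l _
      simp
    · rw [if_pos hij]
      have hcount : ∀ c : ℝ, (∑ l : Fin n, if l ≠ i ∧ l ≠ j then c else 0) = ((n:ℝ)-2)*c := by
        intro c
        have step : ∀ l : Fin n, (if l ≠ i ∧ l ≠ j then c else 0)
            = c - ((if l = i then c else 0) + (if l = j then c else 0)) := by
          intro l
          by_cases hA : l = i
          · subst hA
            rw [if_neg (fun h => h.1 rfl), if_pos rfl, if_neg hij, add_zero, sub_self]
          · by_cases hB : l = j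
            · subst hB
              rw [if_neg (fun h => h.2 rfl), if_neg hA, if_pos rfl, zero_add, sub_self]
            · rw [if_pos ⟨hA, hB⟩, if_neg hA, if_neg hB, add_zero, sub_zero]
        rw [Finset.sum_congr rfl (fun l _ => step l), Finset.sum_sub_distrib,
          Finset.sum_add_distrib, Finset.sum_const]
        simp only [Finset.sum_ite_eq', Finset.mem_univ, if_true, Finset.card_univ,
          Fintype.card_fin, nsmul_eq_mul]
        ring
      have T1 : (∑ k : Fin n, ∑ l : Fin n, if l = j ∧ k = i ∧ i ≠ j then (∫ ω, Z i0 i1 ω * Z i0 i1 ω ∂P) else 0)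
          = (∫ ω, Z i0 i1 ω * Z i0 i1 ω ∂P) := by
        have h1 : ∀ k : Fin n, (∑ l : Fin n, if l = j ∧ k = i ∧ i ≠ j then (∫ ω, Z i0 i1 ω * Z i0 i1 ω ∂P) else 0)
            = if k = i then (∫ ω, Z i0 i1 ω * Z i0 i1 ω ∂P) else 0 := by
          intro k
          by_cases hk : k = i
          · subst hk; simp [hij]
          · simp [hk]
        rw [Finset.sum_congr rfl (fun k _ => h1 k)]
        simp
      have T2 : (∑ k : Fin n, ∑ l : Fin n, if l = i ∧ k = j ∧ i ≠ j then (∫ ω, Z i0 i1 ω * Z i1 i0 ω ∂P) else 0)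
          = (∫ ω, Z i0 i1 ω * Z i1 i0 ω ∂P) := by
        have h1 : ∀ k : Fin n, (∑ l : Fin n, if l = i ∧ k = j ∧ i ≠ j then (∫ ω, Z i0 i1 ω * Z i1 i0 ω ∂P) else 0)
            = if k = j then (∫ ω, Z i0 i1 ω * Z i1 i0 ω ∂P) else 0 := by
          intro k
          by_cases hk : k = j
          · subst hk; simp [hij]
          · simp [hk]
        rw [Finset.sum_congr rfl (fun k _ => h1 k)]
        simp
      have T3 : (∑ k : Fin n, ∑ l : Fin n, if k = i ∧ i ≠ j ∧ l ≠ i ∧ l ≠ j then (∫ ω, Z i0 i1 ω * Z i0 i2 ω ∂P) else 0)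
          = ((n:ℝ)-2) * (∫ ω, Z i0 i1 ω * Z i0 i2 ω ∂P) := by
        have h1 : ∀ k : Fin n, (∑ l : Fin n, if k = i ∧ i ≠ j ∧ l ≠ i ∧ l ≠ j then (∫ ω, Z i0 i1 ω * Z i0 i2 ω ∂P) else 0)
            = if k = i then ((n:ℝ)-2) * (∫ ω, Z i0 i1 ω * Z i0 i2 ω ∂P) else 0 := by
          intro k
          by_cases hk : k = i
          · subst hk
            rw [if_pos rfl, ← hcount (∫ ω, Z i0 i1 ω * Z i0 i2 ω ∂P)]
            exact Finset.sum_congr rfl (fun l _ => by simp [hij])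
          · simp [hk]
        rw [Finset.sum_congr rfl (fun k _ => h1 k)]
        simp
      have T5 : (∑ k : Fin n, ∑ l : Fin n, if k = j ∧ i ≠ j ∧ l ≠ i ∧ l ≠ j then (∫ ω, Z i1 i0 ω * Z i0 i2 ω ∂P) else 0)
          = ((n:ℝ)-2) * (∫ ω, Z i1 i0 ω * Z i0 i2 ω ∂P) := by
        have h1 : ∀ k : Fin n, (∑ l : Fin n, if k = j ∧ i ≠ j ∧ l ≠ i ∧ l ≠ j then (∫ ω, Z i1 i0 ω * Z i0 i2 ω ∂P) else 0)
            = if k = j then ((n:ℝ)-2) * (∫ ω, Z i1 i0 ω * Z i0 i2 ω ∂P) else 0 := by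
          intro k
          by_cases hk : k = j
          · subst hk
            rw [if_pos rfl, ← hcount (∫ ω, Z i1 i0 ω * Z i0 i2 ω ∂P)]
            exact Finset.sum_congr rfl (fun l _ => by simp [hij])
          · simp [hk]
        rw [Finset.sum_congr rfl (fun k _ => h1 k)]
        simp
      have T4 : (∑ k : Fin n, ∑ l : Fin n, if l = i ∧ i ≠ j ∧ k ≠ i ∧ k ≠ j then (∫ ω, Z i0 i1 ω * Z i2 i0 ω ∂P) else 0)
          = ((n:ℝ)-2) * (∫ ω, Z i0 i1 ω * Z i2 i0 ω ∂P) := by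
        have h1 : ∀ k : Fin n, (∑ l : Fin n, if l = i ∧ i ≠ j ∧ k ≠ i ∧ k ≠ j then (∫ ω, Z i0 i1 ω * Z i2 i0 ω ∂P) else 0)
            = if k ≠ i ∧ k ≠ j then (∫ ω, Z i0 i1 ω * Z i2 i0 ω ∂P) else 0 := by
          intro k
          have h2 : ∀ l : Fin n, (if l = i ∧ i ≠ j ∧ k ≠ i ∧ k ≠ j then (∫ ω, Z i0 i1 ω * Z i2 i0 ω ∂P) else 0)
              = if l = i then (if k ≠ i ∧ k ≠ j then (∫ ω, Z i0 i1 ω * Z i2 i0 ω ∂P) else 0) else 0 := by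
            intro l
            by_cases hl : l = i
            · subst hl; simp [hij]
            · simp [hl]
          rw [Finset.sum_congr rfl (fun l _ => h2 l)]
          simp
        rw [Finset.sum_congr rfl (fun k _ => h1 k)]
        exact hcount (∫ ω, Z i0 i1 ω * Z i2 i0 ω ∂P)
      have T6 : (∑ k : Fin n, ∑ l : Fin n, if l = j ∧ i ≠ j ∧ k ≠ i ∧ k ≠ j then (∫ ω, Z i1 i0 ω * Z i2 i0 ω ∂P) else 0)
          = ((n:ℝ)-2) * (∫ ω, Z i1 i0 ω * Z i2 i0 ω ∂P) := by
        have h1 : ∀ k : Fin n, (∑ l : Fin n, if l = j ∧ i ≠ j ∧ k ≠ i ∧ k ≠ j then (∫ ω, Z i1 i0 ω * Z i2 i0 ω ∂P) else 0)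
            = if k ≠ i ∧ k ≠ j then (∫ ω, Z i1 i0 ω * Z i2 i0 ω ∂P) else 0 := by
          intro k
          have h2 : ∀ l : Fin n, (if l = j ∧ i ≠ j ∧ k ≠ i ∧ k ≠ j then (∫ ω, Z i1 i0 ω * Z i2 i0 ω ∂P) else 0)
              = if l = j then (if k ≠ i ∧ k ≠ j then (∫ ω, Z i1 i0 ω * Z i2 i0 ω ∂P) else 0) else 0 := by
            intro l
            by_cases hl : l = j
            · subst hl; simp [hij]
            · simp [hl]
          rw [Finset.sum_congr rfl (fun l _ => h2 l)]
          simp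
        rw [Finset.sum_congr rfl (fun k _ => h1 k)]
        exact hcount (∫ ω, Z i1 i0 ω * Z i2 i0 ω ∂P)
      simp only [Finset.sum_add_distrib]
      rw [T1, T2, T3, T4, T5, T6]
  -- counting the ordered pairs
  have hpair : ∀ c : ℝ, (∑ i : Fin n, ∑ j : Fin n, if i ≠ j then c else 0)
      = (n:ℝ)*((n:ℝ)-1)*c := by
    intro c
    have inner : ∀ i : Fin n, (∑ j : Fin n, if i ≠ j then c else 0) = ((n:ℝ)-1)*c := by
      intro i
      have step : ∀ j : Fin n, (if i ≠ j then c else 0) = c - (if j = i then c else 0) := by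
        intro j
        by_cases h : j = i
        · subst h; simp
        · rw [if_pos (fun hh => h hh.symm), if_neg h, sub_zero]
      rw [Finset.sum_congr rfl (fun j _ => step j), Finset.sum_sub_distrib, Finset.sum_const]
      simp only [Finset.sum_ite_eq', Finset.mem_univ, if_true, Finset.card_univ,
        Fintype.card_fin, nsmul_eq_mul]
      ring
    rw [Finset.sum_congr rfl (fun i _ => inner i), Finset.sum_const]
    simp only [Finset.card_univ, Fintype.card_fin, nsmul_eq_mul]
    ring
  -- expansion of the second moment of the sum
  have hsq : ∫ ω, (∑ p : Fin n × Fin n, W p ω)^2 ∂P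
      = ∑ i : Fin n, ∑ j : Fin n, ∑ k : Fin n, ∑ l : Fin n,
        ∫ ω, W (i, j) ω * W (k, l) ω ∂P := by
    have e1 : ∀ ω, (∑ p : Fin n × Fin n, W p ω)^2
        = ∑ p : Fin n × Fin n, ∑ q : Fin n × Fin n, W p ω * W q ω := by
      intro ω; rw [sq, Finset.sum_mul_sum]
    simp_rw [e1]
    rw [integral_finset_sum _ (fun p _ => integrable_finset_sum _ (fun q _ => hWprodint p q))]
    rw [Finset.sum_congr rfl (fun p _ => integral_finset_sum _ (fun q _ => hWprodint p q))]
    rw [Fintype.sum_prod_type]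
    exact Finset.sum_congr rfl (fun i _ => Finset.sum_congr rfl (fun j _ =>
      Fintype.sum_prod_type _))
  have hmean0 : ∫ ω, (∑ p : Fin n × Fin n, W p ω) ∂P = 0 := by
    rw [integral_finset_sum _ (fun p _ => hWint p)]
    exact Finset.sum_eq_zero (fun p _ => hWmean p)
  have hXeq : (fun ω => ∑ i : Fin n, ∑ j : Fin n, if i ≠ j then Z i j ω else 0)
      = fun ω => ∑ p : Fin n × Fin n, W p ω := by
    funext ω
    rw [Fintype.sum_prod_type]
  rw [hXeq]
  have hXmem : MemLp (fun ω => ∑ p : Fin n × Fin n, W p ω) 2 P :=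
    memLp_finsetSum Finset.univ (fun p _ => hWmem p)
  rw [variance_eq_sub hXmem]
  simp only [Pi.pow_apply]
  rw [hsq, hmean0]
  rw [Finset.sum_congr rfl (fun i _ => Finset.sum_congr rfl (fun j _ =>
    Finset.sum_congr rfl (fun k _ => Finset.sum_congr rfl (fun l _ => hentry i j k l))))]
  rw [Finset.sum_congr rfl (fun i _ => Finset.sum_congr rfl (fun j _ => hsplit i j))]
  rw [hpair]
  simp only [pow_two]
  ring
end

section
/- Let n = K·m with K ≥ 1 and m ≥ 2, and let I₁,…,I_K be a partition of {1,…,n} into K sets, each of cardinality m. Let (ψ_{ij}), indexed by the ordered pairs (i,j) of distinct elements of {1,…,n}, be square-integrable real random variables with E[ψ_{ij}] = 0 for every pair, E[ψ_{ij}·ψ_{kl}] = 0 whenever {i,j} ∩ {k,l} = ∅, and E[ψ_{ij}²] ≤ c² for every pair, where c ≥ 0. Then E[ ( (√n/K) · Σ_{k=1}^K (1/(m(m−1))) · Σ_{(i,j) ∈ I_k × I_k : i≠j} ψ_{ij} )² ] ≤ 8c². -/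
open MeasureTheory ProbabilityTheory

/-- Second-moment bound for the scaled K-fold cross-fitted dyadic score: within-fold
dyadic sample means of a mean-zero array, uncorrelated across pairs sharing no node. -/
theorem dyadic_cross_fitted_score_second_moment
    {Ω : Type*} [MeasurableSpace Ω] (P : Measure Ω) [IsProbabilityMeasure P]
    (n K m : ℕ) (hK : 1 ≤ K) (hm : 2 ≤ m) (hn : n = K * m)
    (I : Fin K → Finset (Fin n))
    (hdisj : ∀ k k' : Fin K, k ≠ k' → Disjoint (I k) (I k'))
    (hcover : ∀ i : Fin n, ∃ k : Fin K, i ∈ I k)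
    (hcard : ∀ k : Fin K, (I k).card = m)
    (c : ℝ) (hc : 0 ≤ c)
    (ψ : Fin n → Fin n → Ω → ℝ)
    (hL2 : ∀ i j : Fin n, i ≠ j → MemLp (ψ i j) 2 P)
    (hmean : ∀ i j : Fin n, i ≠ j → ∫ ω, ψ i j ω ∂P = 0)
    (huncorr : ∀ i j k l : Fin n, i ≠ j → k ≠ l →
      ({i, j} : Set (Fin n)) ∩ ({k, l} : Set (Fin n)) = ∅ →
      ∫ ω, ψ i j ω * ψ k l ω ∂P = 0)
    (hbound : ∀ i j : Fin n, i ≠ j → ∫ ω, (ψ i j ω) ^ 2 ∂P ≤ c ^ 2) :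
    ∫ ω, ((Real.sqrt n / (K : ℝ)) *
        ∑ k : Fin K, ((m : ℝ) * ((m : ℝ) - 1))⁻¹ *
          ∑ i ∈ I k, ∑ j ∈ I k, (if i ≠ j then ψ i j ω else 0)) ^ 2 ∂P
      ≤ 8 * c ^ 2 := by
  classical
  set h : Fin n → Fin n → Ω → ℝ := fun i j => if i ≠ j then ψ i j else 0 with hhdef
  -- basic properties of h
  have hh2 : ∀ i j, MemLp (h i j) 2 P := by
    intro i j
    by_cases hij : i = j
    · simpa [h, hij] using (MemLp.zero : MemLp (0 : Ω → ℝ) 2 P)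
    · simpa [h, hij] using hL2 i j hij
  have hsqint : ∀ i j, Integrable (fun ω => (h i j ω) ^ 2) P :=
    fun i j => (hh2 i j).integrable_sq
  have hintmul : ∀ i j i' j',
      Integrable (fun ω => h i j ω * h i' j' ω) P := by
    intro i j i' j'
    refine Integrable.mono'
      (((hsqint i j).add (hsqint i' j')).div_const 2)
      ((hh2 i j).aestronglyMeasurable.mul (hh2 i' j').aestronglyMeasurable) ?_
    filter_upwards with ω
    rw [Real.norm_eq_abs]
    simp only [Pi.add_apply]
    refine abs_le.mpr ⟨?_, ?_⟩
    · nlinarith [sq_nonneg (h i j ω + h i' j' ω)]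
    · nlinarith [sq_nonneg (h i j ω - h i' j' ω)]
  have hsq : ∀ i j, ∫ ω, (h i j ω) ^ 2 ∂P ≤ c ^ 2 := by
    intro i j
    by_cases hij : i = j
    · simp only [h]
      rw [if_neg (by simpa using hij)]
      simpa using sq_nonneg c
    · simpa [h, hij] using hbound i j hij
  have hCS : ∀ i j i' j', ∫ ω, h i j ω * h i' j' ω ∂P ≤ c ^ 2 := by
    intro i j i' j'
    have step1 : ∫ ω, h i j ω * h i' j' ω ∂P
        ≤ ∫ ω, ((h i j ω) ^ 2 + (h i' j' ω) ^ 2) / 2 ∂P := by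
      refine integral_mono (hintmul i j i' j')
        (((hsqint i j).add (hsqint i' j')).div_const 2) ?_
      intro ω
      nlinarith [sq_nonneg (h i j ω - h i' j' ω)]
    have step2 : ∫ ω, ((h i j ω) ^ 2 + (h i' j' ω) ^ 2) / 2 ∂P
        = (∫ ω, (h i j ω) ^ 2 ∂P + ∫ ω, (h i' j' ω) ^ 2 ∂P) / 2 := by
      rw [integral_div, integral_add (hsqint i j) (hsqint i' j')]
    have := hsq i j
    have := hsq i' j'
    linarith
  have hzero : ∀ i j i' j',
      ({i, j} : Set (Fin n)) ∩ ({i', j'} : Set (Fin n)) = ∅ →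
      ∫ ω, h i j ω * h i' j' ω ∂P = 0 := by
    intro i j i' j' hset
    by_cases hij : i = j
    · simp [h, hij]
    · by_cases hij' : i' = j'
      · simp [h, hij']
      · have := huncorr i j i' j' hij hij' hset
        simpa [h, hij, hij'] using this
  -- the index set
  set T : Finset ((_ : Fin K) × Fin n × Fin n) :=
    (Finset.univ : Finset (Fin K)).sigma (fun k => I k ×ˢ I k) with hT
  set F : Ω → ℝ := fun ω => ∑ x ∈ T, h x.2.1 x.2.2 ω with hF
  set C : ℝ := Real.sqrt n / (K : ℝ) * ((m : ℝ) * ((m : ℝ) - 1))⁻¹ with hC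
  -- rewrite the integrand
  have hrw : ∀ ω, ((Real.sqrt n / (K : ℝ)) *
        ∑ k : Fin K, ((m : ℝ) * ((m : ℝ) - 1))⁻¹ *
          ∑ i ∈ I k, ∑ j ∈ I k, (if i ≠ j then ψ i j ω else 0)) ^ 2
      = C ^ 2 * (F ω) ^ 2 := by
    intro ω
    have h1 : F ω = ∑ k : Fin K, ∑ i ∈ I k, ∑ j ∈ I k,
        (if i ≠ j then ψ i j ω else 0) := by
      show ∑ x ∈ T, h x.2.1 x.2.2 ω = _
      rw [hT, Finset.sum_sigma]
      refine Finset.sum_congr rfl fun k _ => ?_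
      rw [Finset.sum_product]
      refine Finset.sum_congr rfl fun i _ => Finset.sum_congr rfl fun j _ => ?_
      simp only [h, ite_apply, Pi.zero_apply]
    rw [← Finset.mul_sum, ← h1, ← mul_assoc, ← hC, mul_pow]
  rw [integral_congr_ae (Filter.Eventually.of_forall fun ω => hrw ω)]
  -- expand the square of the sum
  have hFint : ∀ x ∈ T, ∀ y ∈ T,
      Integrable (fun ω => h x.2.1 x.2.2 ω * h y.2.1 y.2.2 ω) P :=
    fun x _ y _ => hintmul _ _ _ _
  have hexp : ∫ ω, (F ω) ^ 2 ∂P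
      = ∑ x ∈ T, ∑ y ∈ T, ∫ ω, h x.2.1 x.2.2 ω * h y.2.1 y.2.2 ω ∂P := by
    have h1 : ∀ ω, (F ω) ^ 2
        = ∑ x ∈ T, ∑ y ∈ T, h x.2.1 x.2.2 ω * h y.2.1 y.2.2 ω := by
      intro ω
      rw [sq, hF, Finset.sum_mul_sum]
    simp only [h1]
    rw [integral_finset_sum T (fun x hx =>
      integrable_finset_sum T (fun y hy => hFint x hx y hy))]
    exact Finset.sum_congr rfl fun x hx =>
      integral_finset_sum T (fun y hy => hFint x hx y hy)
  rw [integral_const_mul, hexp]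
  -- bound the double sum
  have hmR : (2 : ℝ) ≤ (m : ℝ) := by exact_mod_cast hm
  have hKR : (1 : ℝ) ≤ (K : ℝ) := by exact_mod_cast hK
  have hinner : ∀ x ∈ T,
      ∑ y ∈ T, ∫ ω, h x.2.1 x.2.2 ω * h y.2.1 y.2.2 ω ∂P
      ≤ if x.2.1 ≠ x.2.2 then 4 * (m : ℝ) * c ^ 2 else 0 := by
    rintro ⟨k, i, j⟩ hx
    simp only [hT, Finset.mem_sigma, Finset.mem_univ, Finset.mem_product,
      true_and] at hx
    obtain ⟨hiI, hjI⟩ := hx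
    by_cases hij : i ≠ j
    · rw [if_pos hij]
      have hsum : ∑ y ∈ T, ∫ ω, h i j ω * h y.2.1 y.2.2 ω ∂P
          = ∑ k' : Fin K, ∑ p ∈ I k' ×ˢ I k', ∫ ω, h i j ω * h p.1 p.2 ω ∂P := by
        rw [hT, Finset.sum_sigma]
      rw [hsum]
      have hothers : ∀ k' : Fin K, k' ≠ k →
          ∑ p ∈ I k' ×ˢ I k', ∫ ω, h i j ω * h p.1 p.2 ω ∂P = 0 := by
        intro k' hk'
        refine Finset.sum_eq_zero fun p hp => ?_
        rw [Finset.mem_product] at hp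
        refine hzero i j p.1 p.2 ?_
        have hd := hdisj k k' (Ne.symm hk')
        rw [Set.eq_empty_iff_forall_notMem]
        rintro x ⟨hx1, hx2⟩
        have hxk : x ∈ I k := by
          rcases hx1 with rfl | rfl
          · exact hiI
          · exact hjI
        have hxk' : x ∈ I k' := by
          rcases hx2 with rfl | rfl
          · exact hp.1
          · exact hp.2
        exact (Finset.disjoint_left.mp hd hxk) hxk'
      rw [Finset.sum_eq_single_of_mem k (Finset.mem_univ k)
        (fun k' _ hk' => hothers k' hk')]
      -- within the same fold
      have hterm : ∀ p ∈ I k ×ˢ I k,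
          ∫ ω, h i j ω * h p.1 p.2 ω ∂P
          ≤ if p.1 = i ∨ p.1 = j ∨ p.2 = i ∨ p.2 = j then c ^ 2 else 0 := by
        intro p hp
        by_cases hcond : p.1 = i ∨ p.1 = j ∨ p.2 = i ∨ p.2 = j
        · simp only [hcond, if_true]
          exact hCS i j p.1 p.2
        · push_neg at hcond
          simp only [hcond, if_false]
          refine le_of_eq (hzero i j p.1 p.2 ?_)
          rw [Set.eq_empty_iff_forall_notMem]
          rintro x ⟨hx1, hx2⟩
          rcases hx2 with rfl | rfl
          · rcases hx1 with rfl | rfl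
            · exact hcond.1 rfl
            · exact hcond.2.1 rfl
          · rcases hx1 with rfl | rfl
            · exact hcond.2.2.1 rfl
            · exact hcond.2.2.2 rfl
      calc ∑ p ∈ I k ×ˢ I k, ∫ ω, h i j ω * h p.1 p.2 ω ∂P
          ≤ ∑ p ∈ I k ×ˢ I k,
              (if p.1 = i ∨ p.1 = j ∨ p.2 = i ∨ p.2 = j then c ^ 2 else 0) :=
            Finset.sum_le_sum hterm
        _ = ((I k ×ˢ I k).filter
              (fun p => p.1 = i ∨ p.1 = j ∨ p.2 = i ∨ p.2 = j)).card * c ^ 2 := by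
            rw [← Finset.sum_filter, Finset.sum_const, nsmul_eq_mul]
        _ ≤ 4 * (m : ℝ) * c ^ 2 := by
            have hsub : (I k ×ˢ I k).filter
                (fun p => p.1 = i ∨ p.1 = j ∨ p.2 = i ∨ p.2 = j)
                ⊆ ({i, j} ×ˢ I k) ∪ (I k ×ˢ {i, j}) := by
              intro p hp
              rw [Finset.mem_filter, Finset.mem_product] at hp
              obtain ⟨⟨hp1, hp2⟩, hcond⟩ := hp
              rw [Finset.mem_union, Finset.mem_product, Finset.mem_product]
              rcases hcond with h1 | h1 | h1 | h1
              · exact Or.inl ⟨by simp [h1], hp2⟩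
              · exact Or.inl ⟨by simp [h1], hp2⟩
              · exact Or.inr ⟨hp1, by simp [h1]⟩
              · exact Or.inr ⟨hp1, by simp [h1]⟩
            have hcount : ((I k ×ˢ I k).filter
                (fun p => p.1 = i ∨ p.1 = j ∨ p.2 = i ∨ p.2 = j)).card
                ≤ 4 * m := by
              calc _ ≤ (({i, j} ×ˢ I k) ∪ (I k ×ˢ {i, j})).card :=
                    Finset.card_le_card hsub
                _ ≤ ({i, j} ×ˢ I k).card + (I k ×ˢ {i, j}).card :=
                    Finset.card_union_le _ _
                _ ≤ 2 * m + m * 2 := by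
                    rw [Finset.card_product, Finset.card_product, hcard k]
                    have h2 : ({i, j} : Finset (Fin n)).card ≤ 2 :=
                      Finset.card_insert_le i {j} |>.trans (by simp)
                    exact add_le_add (Nat.mul_le_mul_right m h2)
                      (Nat.mul_le_mul_left m h2)
                _ = 4 * m := by ring
            have : (((I k ×ˢ I k).filter
                (fun p => p.1 = i ∨ p.1 = j ∨ p.2 = i ∨ p.2 = j)).card : ℝ)
                ≤ 4 * (m : ℝ) := by exact_mod_cast hcount
            exact mul_le_mul_of_nonneg_right this (sq_nonneg c)
    · -- diagonal: everything is zero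
      push_neg at hij
      subst hij
      rw [if_neg (fun hh => hh rfl)]
      refine le_of_eq (Finset.sum_eq_zero fun y _ => ?_)
      simp [h]
  have hdouble : ∑ x ∈ T, ∑ y ∈ T, ∫ ω, h x.2.1 x.2.2 ω * h y.2.1 y.2.2 ω ∂P
      ≤ (K : ℝ) * ((m : ℝ) * (m : ℝ) - (m : ℝ)) * (4 * (m : ℝ) * c ^ 2) := by
    calc ∑ x ∈ T, ∑ y ∈ T, ∫ ω, h x.2.1 x.2.2 ω * h y.2.1 y.2.2 ω ∂P
        ≤ ∑ x ∈ T, (if x.2.1 ≠ x.2.2 then 4 * (m : ℝ) * c ^ 2 else 0) :=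
          Finset.sum_le_sum hinner
      _ = ∑ k : Fin K, ∑ p ∈ I k ×ˢ I k,
            (if p.1 ≠ p.2 then 4 * (m : ℝ) * c ^ 2 else 0) := by
          rw [hT, Finset.sum_sigma]
      _ = ∑ k : Fin K, ((I k).offDiag.card : ℝ) * (4 * (m : ℝ) * c ^ 2) := by
          refine Finset.sum_congr rfl fun k _ => ?_
          have hfil : (I k ×ˢ I k).filter (fun p => p.1 ≠ p.2)
              = (I k).offDiag := by
            ext p
            simp [Finset.mem_offDiag, Finset.mem_filter, Finset.mem_product,
              and_assoc]
          rw [← Finset.sum_filter, hfil, Finset.sum_const, nsmul_eq_mul]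
      _ = (K : ℝ) * ((m : ℝ) * (m : ℝ) - (m : ℝ)) * (4 * (m : ℝ) * c ^ 2) := by
          have hoff : ∀ k : Fin K, ((I k).offDiag.card : ℝ)
              = (m : ℝ) * (m : ℝ) - (m : ℝ) := by
            intro k
            rw [Finset.offDiag_card, hcard k]
            have hle : m ≤ m * m := Nat.le_mul_of_pos_left m (by omega)
            push_cast [Nat.cast_sub hle]
            ring
          simp only [hoff]
          rw [Finset.sum_const, Finset.card_univ, Fintype.card_fin, nsmul_eq_mul]
          ring
  -- final arithmetic
  have hCpos : (0 : ℝ) ≤ C ^ 2 := sq_nonneg C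
  have hfinal : C ^ 2 * ((K : ℝ) * ((m : ℝ) * (m : ℝ) - (m : ℝ)) *
      (4 * (m : ℝ) * c ^ 2)) ≤ 8 * c ^ 2 := by
    have hnR : ((n : ℝ)) = (K : ℝ) * (m : ℝ) := by exact_mod_cast hn
    have hCsq : C ^ 2 = (K : ℝ) * (m : ℝ) /
        ((K : ℝ) ^ 2 * ((m : ℝ) * ((m : ℝ) - 1)) ^ 2) := by
      rw [hC, mul_pow, div_pow, Real.sq_sqrt (by positivity : (0 : ℝ) ≤ (n : ℝ)),
        hnR]
      field_simp
    rw [hCsq]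
    have hm1 : (0 : ℝ) < (m : ℝ) - 1 := by linarith
    have hKpos : (0 : ℝ) < (K : ℝ) := by linarith
    have hmm : (m : ℝ) * (m : ℝ) - (m : ℝ) = (m : ℝ) * ((m : ℝ) - 1) := by ring
    have key : (K : ℝ) * (m : ℝ) /
        ((K : ℝ) ^ 2 * ((m : ℝ) * ((m : ℝ) - 1)) ^ 2) *
        ((K : ℝ) * ((m : ℝ) * (m : ℝ) - (m : ℝ)) * (4 * (m : ℝ)))
        = 4 * (m : ℝ) / ((m : ℝ) - 1) := by
      rw [hmm]
      field_simp
    have hle8 : 4 * (m : ℝ) / ((m : ℝ) - 1) ≤ 8 := by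
      rw [div_le_iff₀ hm1]
      linarith
    calc (K : ℝ) * (m : ℝ) / ((K : ℝ) ^ 2 * ((m : ℝ) * ((m : ℝ) - 1)) ^ 2) *
          ((K : ℝ) * ((m : ℝ) * (m : ℝ) - (m : ℝ)) * (4 * (m : ℝ) * c ^ 2))
        = ((K : ℝ) * (m : ℝ) / ((K : ℝ) ^ 2 * ((m : ℝ) * ((m : ℝ) - 1)) ^ 2) *
          ((K : ℝ) * ((m : ℝ) * (m : ℝ) - (m : ℝ)) * (4 * (m : ℝ)))) * c ^ 2 := by
          ring
      _ = (4 * (m : ℝ) / ((m : ℝ) - 1)) * c ^ 2 := by rw [key]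
      _ ≤ 8 * c ^ 2 := mul_le_mul_of_nonneg_right hle8 (sq_nonneg c)
  calc C ^ 2 * ∑ x ∈ T, ∑ y ∈ T, ∫ ω, h x.2.1 x.2.2 ω * h y.2.1 y.2.2 ω ∂P
      ≤ C ^ 2 * ((K : ℝ) * ((m : ℝ) * (m : ℝ) - (m : ℝ)) *
        (4 * (m : ℝ) * c ^ 2)) := mul_le_mul_of_nonneg_left hdouble hCpos
    _ ≤ 8 * c ^ 2 := hfinal
end

section
/- Let θ₀ ∈ ℝ and β₀, γ₀ ∈ ℝ^p, and assume: (a) 0 ≤ Y ≤ 1 almost surely; (b) D and every coordinate X_l (l = 1,…,p) of X are square-integrable; (c) E[Y | σ(D,X)] = Λ(Dθ₀ + ⟨X, β₀⟩) almost surely; (d) E[ Λ'(Dθ₀ + ⟨X, β₀⟩) · (D − ⟨X, γ₀⟩) · X_l ] = 0 for every l = 1,…,p. Then for all β, γ ∈ ℝ^p, the function φ(r) := E[ (Y − Λ(Dθ₀ + ⟨X, β₀ + r(β−β₀)⟩)) · (D − ⟨X, γ₀ + r(γ−γ₀)⟩) ] satisfies φ(0) = 0 and φ is differentiable at r = 0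 with φ'(0) = 0. -/
open MeasureTheory ProbabilityTheory

/-- The logistic function Λ(t) = exp t / (1 + exp t). -/
noncomputable def logistic (t : ℝ) : ℝ := Real.exp t / (1 + Real.exp t)

/-- The derivative of the logistic function, Λ'(t) = Λ(t)(1 − Λ(t)). -/
noncomputable def logisticDeriv (t : ℝ) : ℝ := logistic t * (1 - logistic t)

lemma one_add_exp_pos (t : ℝ) : 0 < 1 + Real.exp t := by positivity

lemma logistic_pos (t : ℝ) : 0 < logistic t :=
  div_pos (Real.exp_pos t) (one_add_exp_pos t)

lemma logistic_lt_one (t : ℝ) : logistic t < 1 := by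
  rw [logistic, div_lt_one (one_add_exp_pos t)]; linarith

lemma continuous_logistic : Continuous logistic :=
  Real.continuous_exp.div (continuous_const.add Real.continuous_exp)
    (fun t => ne_of_gt (one_add_exp_pos t))

lemma measurable_logistic : Measurable logistic := continuous_logistic.measurable

lemma measurable_logisticDeriv : Measurable logisticDeriv :=
  (continuous_logistic.mul (continuous_const.sub continuous_logistic)).measurable

lemma hasDerivAt_logistic (t : ℝ) : HasDerivAt logistic (logisticDeriv t) t := by
  have h := (Real.hasDerivAt_exp t).div ((hasDerivAt_const t (1:ℝ)).add (Real.hasDerivAt_exp t))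
    (ne_of_gt (one_add_exp_pos t))
  refine h.congr_deriv ?_
  rw [logisticDeriv, logistic, Pi.add_apply]
  field_simp
  ring

lemma logisticDeriv_mem (t : ℝ) : 0 ≤ logisticDeriv t ∧ logisticDeriv t ≤ 1 := by
  have h1 := logistic_pos t
  have h2 := logistic_lt_one t
  rw [logisticDeriv]
  constructor <;> nlinarith

lemma memL2_mul_integrable {Ω : Type*} [MeasurableSpace Ω] {P : Measure Ω}
    {f g : Ω → ℝ} (hf : MemLp f 2 P) (hg : MemLp g 2 P) :
    Integrable (fun ω => f ω * g ω) P := by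
  refine Integrable.mono' ((hf.integrable_sq.add hg.integrable_sq).div_const 2)
    (hf.aestronglyMeasurable.mul hg.aestronglyMeasurable) ?_
  filter_upwards with ω
  simp only [Pi.add_apply, Real.norm_eq_abs, abs_mul]
  nlinarith [abs_nonneg (f ω), abs_nonneg (g ω), sq_abs (f ω), sq_abs (g ω),
    sq_nonneg (|f ω| - |g ω|)]

/-- `∫ (Y - Λ∘t) · g = 0` for `𝒢`-measurable square-integrable `g`, when `E[Y|𝒢] = Λ∘t`. -/
lemma key_zero {Ω : Type*} {𝒢 m0 : MeasurableSpace Ω} (hm : 𝒢 ≤ m0)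
    (P : Measure Ω) [IsProbabilityMeasure P]
    {Y t g : Ω → ℝ} (hY : Measurable Y) (ht : Measurable t)
    (hYb : ∀ᵐ ω ∂P, 0 ≤ Y ω ∧ Y ω ≤ 1)
    (hg𝒢 : StronglyMeasurable[𝒢] g) (hg2 : MemLp g 2 P)
    (hcond : P[Y|𝒢] =ᵐ[P] fun ω => logistic (t ω)) :
    ∫ ω, (Y ω - logistic (t ω)) * g ω ∂P = 0 := by
  have hgm : Measurable g := hg𝒢.measurable.mono hm le_rfl
  have hgi : Integrable g P := hg2.integrable one_le_two
  have hYae : ∀ᵐ ω ∂P, |Y ω| ≤ 1 := by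
    filter_upwards [hYb] with ω h; rw [abs_le]; exact ⟨by linarith [h.1], h.2⟩
  have hYi : Integrable Y P := by
    refine Integrable.mono' (integrable_const 1) hY.aestronglyMeasurable ?_
    filter_upwards [hYae] with ω h using by simpa using h
  have hgY : Integrable (fun ω => g ω * Y ω) P := by
    refine Integrable.mono' hgi.abs (hgm.mul hY).aestronglyMeasurable ?_
    filter_upwards [hYae] with ω h
    rw [Real.norm_eq_abs, abs_mul]
    nlinarith [abs_nonneg (g ω)]
  have hgY' : Integrable (g * Y) P := hgY
  have hgf : Integrable (fun ω => g ω * logistic (t ω)) P := by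
    refine Integrable.mono' hgi.abs
      (hgm.mul (measurable_logistic.comp ht)).aestronglyMeasurable ?_
    filter_upwards with ω
    rw [Real.norm_eq_abs, abs_mul]
    nlinarith [abs_nonneg (g ω), logistic_pos (t ω), logistic_lt_one (t ω),
      abs_of_pos (logistic_pos (t ω))]
  have hpull : P[g * Y|𝒢] =ᵐ[P] g * P[Y|𝒢] :=
    condExp_mul_of_stronglyMeasurable_left hg𝒢 hgY' hYi
  have h1 : ∫ ω, g ω * Y ω ∂P = ∫ ω, g ω * logistic (t ω) ∂P :=
    calc ∫ ω, g ω * Y ω ∂P = ∫ ω, (g * Y) ω ∂P := rfl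
      _ = ∫ ω, (P[g * Y|𝒢]) ω ∂P := (integral_condExp hm).symm
      _ = ∫ ω, g ω * logistic (t ω) ∂P := by
          refine integral_congr_ae (hpull.trans ?_)
          filter_upwards [hcond] with ω h
          rw [Pi.mul_apply, h]
  have heq : ∀ ω, (Y ω - logistic (t ω)) * g ω = g ω * Y ω - g ω * logistic (t ω) :=
    fun ω => by ring
  simp only [heq]
  rw [integral_sub hgY hgf, h1, sub_self]

/-- Abstract form of the moment and orthogonality conditions. -/
theorem aux_main {Ω : Type*} {𝒢 m0 : MeasurableSpace Ω} (hm : 𝒢 ≤ m0)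
    (P : Measure Ω) [IsProbabilityMeasure P]
    {Y t u v W : Ω → ℝ}
    (hY : Measurable Y) (ht : Measurable t) (hum : Measurable u)
    (hvm : Measurable v) (hWm : Measurable W)
    (hW𝒢 : StronglyMeasurable[𝒢] W) (hv𝒢 : StronglyMeasurable[𝒢] v)
    (hYb : ∀ᵐ ω ∂P, 0 ≤ Y ω ∧ Y ω ≤ 1)
    (hu2 : MemLp u 2 P) (hv2 : MemLp v 2 P) (hW2 : MemLp W 2 P)
    (hcond : P[Y|𝒢] =ᵐ[P] fun ω => logistic (t ω))
    (horth : ∫ ω, logisticDeriv (t ω) * W ω * u ω ∂P = 0) :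
    (∫ ω, (Y ω - logistic (t ω + (0:ℝ) * u ω)) * (W ω - (0:ℝ) * v ω) ∂P = 0) ∧
    HasDerivAt (fun r : ℝ => ∫ ω, (Y ω - logistic (t ω + r * u ω)) * (W ω - r * v ω) ∂P) 0 0 := by
  have hYae : ∀ᵐ ω ∂P, |Y ω| ≤ 1 := by
    filter_upwards [hYb] with ω h; rw [abs_le]; exact ⟨by linarith [h.1], h.2⟩
  have hzero : ∫ ω, (Y ω - logistic (t ω + (0:ℝ) * u ω)) * (W ω - (0:ℝ) * v ω) ∂P = 0 := by
    simp only [zero_mul, add_zero, sub_zero]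
    exact key_zero hm P hY ht hYb hW𝒢 hW2 hcond
  refine ⟨hzero, ?_⟩
  set F' : ℝ → Ω → ℝ := fun r ω =>
    -(logisticDeriv (t ω + r * u ω) * u ω) * (W ω - r * v ω) +
      (Y ω - logistic (t ω + r * u ω)) * (-v ω) with hF'
  have hmeas : ∀ r : ℝ, Measurable (fun ω => (Y ω - logistic (t ω + r * u ω)) * (W ω - r * v ω)) :=
    fun r => (hY.sub (measurable_logistic.comp (ht.add (hum.const_mul r)))).mul
      (hWm.sub (hvm.const_mul r))
  have hF_int : Integrable (fun ω => (Y ω - logistic (t ω + (0:ℝ) * u ω)) * (W ω - (0:ℝ) * v ω)) P := by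
    refine Integrable.mono' ((hW2.integrable one_le_two).abs.const_mul 2)
      (hmeas 0).aestronglyMeasurable ?_
    filter_upwards [hYae] with ω h
    rw [Real.norm_eq_abs, abs_mul]
    have h1 := logistic_pos (t ω + 0 * u ω)
    have h2 := logistic_lt_one (t ω + 0 * u ω)
    have hd : |Y ω - logistic (t ω + 0 * u ω)| ≤ 2 := by
      rw [abs_le] at h ⊢; constructor <;> [linarith [h.1]; linarith [h.2]]
    have h3 : |W ω - 0 * v ω| = |W ω| := by norm_num
    rw [h3]
    nlinarith [abs_nonneg (W ω), abs_nonneg (Y ω - logistic (t ω + 0 * u ω))]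
  have hF'_meas : AEStronglyMeasurable (F' 0) P := by
    refine Measurable.aestronglyMeasurable ?_
    exact ((((measurable_logisticDeriv.comp (ht.add (hum.const_mul 0))).mul hum).neg).mul
        (hWm.sub (hvm.const_mul 0))).add
      ((hY.sub (measurable_logistic.comp (ht.add (hum.const_mul 0)))).mul hvm.neg)
  have hbound_int : Integrable (fun ω => |u ω| * |W ω| + |u ω| * |v ω| + 2 * |v ω|) P := by
    have h1 : Integrable (fun ω => |u ω| * |W ω|) P := by
      simpa [abs_mul] using (memL2_mul_integrable hu2 hW2).abs
    have h2 : Integrable (fun ω => |u ω| * |v ω|) P := by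
      simpa [abs_mul] using (memL2_mul_integrable hu2 hv2).abs
    exact (h1.add h2).add ((hv2.integrable one_le_two).abs.const_mul 2)
  have h_bound : ∀ᵐ ω ∂P, ∀ r ∈ Metric.ball (0:ℝ) 1,
      ‖F' r ω‖ ≤ |u ω| * |W ω| + |u ω| * |v ω| + 2 * |v ω| := by
    filter_upwards [hYae] with ω hYω r hr
    rw [mem_ball_zero_iff, Real.norm_eq_abs] at hr
    have hL := logisticDeriv_mem (t ω + r * u ω)
    have hL1 := logistic_pos (t ω + r * u ω)
    have hL2 := logistic_lt_one (t ω + r * u ω)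
    have hd1 : |logisticDeriv (t ω + r * u ω)| ≤ 1 := by rw [abs_of_nonneg hL.1]; exact hL.2
    have hd2 : |W ω - r * v ω| ≤ |W ω| + |v ω| := by
      calc |W ω - r * v ω| ≤ |W ω| + |r * v ω| := abs_sub _ _
        _ ≤ |W ω| + |v ω| := by
            rw [abs_mul]; nlinarith [abs_nonneg (v ω)]
    have hd3 : |Y ω - logistic (t ω + r * u ω)| ≤ 2 := by
      rw [abs_le] at hYω ⊢; constructor <;> [linarith [hYω.1]; linarith [hYω.2]]
    have t1 : |logisticDeriv (t ω + r * u ω)| * |u ω| ≤ |u ω| := by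
      nlinarith [abs_nonneg (u ω)]
    have t2 : (|logisticDeriv (t ω + r * u ω)| * |u ω|) * |W ω - r * v ω|
        ≤ |u ω| * (|W ω| + |v ω|) :=
      mul_le_mul t1 hd2 (abs_nonneg _) (abs_nonneg _)
    have t3 : |Y ω - logistic (t ω + r * u ω)| * |v ω| ≤ 2 * |v ω| :=
      mul_le_mul_of_nonneg_right hd3 (abs_nonneg _)
    rw [Real.norm_eq_abs]
    calc |F' r ω| ≤ |(-(logisticDeriv (t ω + r * u ω) * u ω)) * (W ω - r * v ω)| +
          |(Y ω - logistic (t ω + r * u ω)) * (-v ω)| := abs_add_le _ _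
      _ = (|logisticDeriv (t ω + r * u ω)| * |u ω|) * |W ω - r * v ω| +
          |Y ω - logistic (t ω + r * u ω)| * |v ω| := by
          rw [abs_mul, abs_neg, abs_mul, abs_mul, abs_neg]
      _ ≤ |u ω| * (|W ω| + |v ω|) + 2 * |v ω| := add_le_add t2 t3
      _ = |u ω| * |W ω| + |u ω| * |v ω| + 2 * |v ω| := by ring
  have h_diff : ∀ᵐ ω ∂P, ∀ r ∈ Metric.ball (0:ℝ) 1,
      HasDerivAt (fun r => (Y ω - logistic (t ω + r * u ω)) * (W ω - r * v ω)) (F' r ω) r := by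
    filter_upwards with ω r _
    have hinner : HasDerivAt (fun r : ℝ => t ω + r * u ω) (u ω) r := by
      simpa using (hasDerivAt_mul_const (u ω)).const_add (t ω)
    have hA : HasDerivAt (fun r : ℝ => Y ω - logistic (t ω + r * u ω))
        (-(logisticDeriv (t ω + r * u ω) * u ω)) r :=
      by have h := (hasDerivAt_logistic (t ω + r * u ω)).comp r hinner; exact h.const_sub (Y ω)
    have hB : HasDerivAt (fun r : ℝ => W ω - r * v ω) (-v ω) r :=
      (hasDerivAt_mul_const (v ω)).const_sub (W ω)
    exact hA.mul hB
  have key := hasDerivAt_integral_of_dominated_loc_of_deriv_le (μ := P)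
    (F := fun r ω => (Y ω - logistic (t ω + r * u ω)) * (W ω - r * v ω)) (F' := F')
    (x₀ := (0:ℝ)) (Metric.ball_mem_nhds 0 one_pos)
    (Filter.Eventually.of_forall (fun r => (hmeas r).aestronglyMeasurable))
    hF_int hF'_meas h_bound hbound_int h_diff
  have hzero' : ∫ ω, F' 0 ω ∂P = 0 := by
    have e1 : ∀ ω, F' 0 ω = -(logisticDeriv (t ω) * W ω * u ω) +
        -((Y ω - logistic (t ω)) * v ω) := by
      intro ω; rw [hF']; simp only [zero_mul, add_zero, sub_zero]; ring
    have i1 : Integrable (fun ω => logisticDeriv (t ω) * W ω * u ω) P := by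
      refine Integrable.mono' (memL2_mul_integrable hW2 hu2).abs
        (((measurable_logisticDeriv.comp ht).mul hWm).mul hum).aestronglyMeasurable ?_
      filter_upwards with ω
      have hL := logisticDeriv_mem (t ω)
      have hd1 : |logisticDeriv (t ω)| ≤ 1 := by rw [abs_of_nonneg hL.1]; exact hL.2
      rw [Real.norm_eq_abs, abs_mul, abs_mul, abs_mul]
      nlinarith [abs_nonneg (W ω), abs_nonneg (u ω), abs_nonneg (logisticDeriv (t ω)),
        mul_nonneg (abs_nonneg (W ω)) (abs_nonneg (u ω))]
    have i2 : Integrable (fun ω => (Y ω - logistic (t ω)) * v ω) P := by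
      refine Integrable.mono' ((hv2.integrable one_le_two).abs.const_mul 2)
        ((hY.sub (measurable_logistic.comp ht)).mul hvm).aestronglyMeasurable ?_
      filter_upwards [hYae] with ω h
      rw [Real.norm_eq_abs, abs_mul]
      have h1 := logistic_pos (t ω)
      have h2 := logistic_lt_one (t ω)
      have hd : |Y ω - logistic (t ω)| ≤ 2 := by
        rw [abs_le] at h ⊢; constructor <;> [linarith [h.1]; linarith [h.2]]
      nlinarith [abs_nonneg (v ω)]
    have i1' : Integrable (fun ω => -(logisticDeriv (t ω) * W ω * u ω)) P := i1.neg
    have i2' : Integrable (fun ω => -((Y ω - logistic (t ω)) * v ω)) P := i2.neg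
    simp only [e1]
    rw [integral_add i1' i2', integral_neg, integral_neg, horth,
      key_zero hm P hY ht hYb hv𝒢 hv2 hcond]
    simp
  have hfin := key.2
  rw [hzero'] at hfin
  exact hfin

/-- Moment condition and Neyman orthogonality of the logistic dyadic link formation
score with respect to the nuisance parameters (β, γ) at (β₀, γ₀). -/
theorem logistic_score_neyman_orthogonality
    {Ω : Type*} [MeasurableSpace Ω] (P : Measure Ω) [IsProbabilityMeasure P]
    {p : ℕ} (Y D : Ω → ℝ) (X : Ω → Fin p → ℝ)
    (hY : Measurable Y) (hD : Measurable D) (hX : Measurable X)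
    (θ₀ : ℝ) (β₀ γ₀ : Fin p → ℝ)
    (hYb : ∀ᵐ ω ∂P, 0 ≤ Y ω ∧ Y ω ≤ 1)
    (hD2 : MemLp D 2 P)
    (hX2 : ∀ l : Fin p, MemLp (fun ω => X ω l) 2 P)
    (hcond : P[Y | MeasurableSpace.comap (fun ω => (D ω, X ω)) inferInstance]
      =ᵐ[P] fun ω => logistic (D ω * θ₀ + ∑ l, X ω l * β₀ l))
    (horth : ∀ l : Fin p,
      ∫ ω, logisticDeriv (D ω * θ₀ + ∑ l', X ω l' * β₀ l') *
        (D ω - ∑ l', X ω l' * γ₀ l') * X ω l ∂P = 0) :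
    ∀ β γ : Fin p → ℝ,
      ((fun r : ℝ => ∫ ω,
          (Y ω - logistic (D ω * θ₀ + ∑ l, X ω l * (β₀ l + r * (β l - β₀ l)))) *
          (D ω - ∑ l, X ω l * (γ₀ l + r * (γ l - γ₀ l))) ∂P) 0 = 0)
      ∧ HasDerivAt
          (fun r : ℝ => ∫ ω,
            (Y ω - logistic (D ω * θ₀ + ∑ l, X ω l * (β₀ l + r * (β l - β₀ l)))) *
            (D ω - ∑ l, X ω l * (γ₀ l + r * (γ l - γ₀ l))) ∂P)
          0 0 := by
  intro β γ
  have hXl : ∀ l : Fin p, Measurable (fun ω => X ω l) :=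
    fun l => (measurable_pi_apply l).comp hX
  have hm : MeasurableSpace.comap (fun ω => (D ω, X ω)) inferInstance ≤ _ := (hD.prodMk hX).comap_le
  have hDX𝒢 : Measurable[MeasurableSpace.comap (fun ω => (D ω, X ω)) inferInstance] (fun ω => (D ω, X ω)) := Measurable.of_comap_le le_rfl
  have hD𝒢 : Measurable[MeasurableSpace.comap (fun ω => (D ω, X ω)) inferInstance] D := measurable_fst.comp hDX𝒢
  have hXl𝒢 : ∀ l : Fin p, Measurable[MeasurableSpace.comap (fun ω => (D ω, X ω)) inferInstance] (fun ω => X ω l) :=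
    fun l => ((measurable_pi_apply l).comp measurable_snd).comp hDX𝒢
  -- the four auxiliary functions
  have ht : Measurable (fun ω => D ω * θ₀ + ∑ l, X ω l * β₀ l) :=
    (hD.mul_const θ₀).add (Finset.measurable_sum _ fun l _ => (hXl l).mul_const (β₀ l))
  have hsumm : ∀ c : Fin p → ℝ, Measurable (fun ω => ∑ l, X ω l * c l) :=
    fun c => Finset.measurable_sum _ fun l _ => (hXl l).mul_const (c l)
  have hsumm𝒢 : ∀ c : Fin p → ℝ, Measurable[MeasurableSpace.comap (fun ω => (D ω, X ω)) inferInstance] (fun ω => ∑ l, X ω l * c l) :=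
    fun c => Finset.measurable_sum _ fun l _ => (hXl𝒢 l).mul_const (c l)
  have hsum2 : ∀ c : Fin p → ℝ, MemLp (fun ω => ∑ l, X ω l * c l) 2 P := by
    intro c
    have : ∀ l : Fin p, MemLp (fun ω => X ω l * c l) 2 P := by
      intro l
      simpa [mul_comm] using (hX2 l).const_mul (c l)
    exact memLp_finset_sum _ (fun l _ => this l)
  have hW2 : MemLp (fun ω => D ω - ∑ l, X ω l * γ₀ l) 2 P := hD2.sub (hsum2 γ₀)
  have hW𝒢 : StronglyMeasurable[MeasurableSpace.comap (fun ω => (D ω, X ω)) inferInstance] (fun ω => D ω - ∑ l, X ω l * γ₀ l) :=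
    (hD𝒢.sub (hsumm𝒢 γ₀)).stronglyMeasurable
  have hv𝒢 : StronglyMeasurable[MeasurableSpace.comap (fun ω => (D ω, X ω)) inferInstance] (fun ω => ∑ l, X ω l * (γ l - γ₀ l)) :=
    (hsumm𝒢 _).stronglyMeasurable
  -- orthogonality against u
  have horth' : ∫ ω, logisticDeriv (D ω * θ₀ + ∑ l, X ω l * β₀ l) *
      (D ω - ∑ l, X ω l * γ₀ l) * (∑ l, X ω l * (β l - β₀ l)) ∂P = 0 := by
    have hptw : ∀ ω, logisticDeriv (D ω * θ₀ + ∑ l, X ω l * β₀ l) *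
        (D ω - ∑ l, X ω l * γ₀ l) * (∑ l, X ω l * (β l - β₀ l)) =
        ∑ l, (β l - β₀ l) * (logisticDeriv (D ω * θ₀ + ∑ l', X ω l' * β₀ l') *
          (D ω - ∑ l', X ω l' * γ₀ l') * X ω l) := by
      intro ω
      rw [Finset.mul_sum]
      exact Finset.sum_congr rfl fun l _ => by ring
    have hIl : ∀ l : Fin p, Integrable (fun ω =>
        logisticDeriv (D ω * θ₀ + ∑ l', X ω l' * β₀ l') *
          (D ω - ∑ l', X ω l' * γ₀ l') * X ω l) P := by
      intro l
      refine Integrable.mono' (memL2_mul_integrable hW2 (hX2 l)).abs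
        (((measurable_logisticDeriv.comp ht).mul (hD.sub (hsumm γ₀))).mul
          (hXl l)).aestronglyMeasurable ?_
      filter_upwards with ω
      have hL := logisticDeriv_mem (D ω * θ₀ + ∑ l', X ω l' * β₀ l')
      have hd1 : |logisticDeriv (D ω * θ₀ + ∑ l', X ω l' * β₀ l')| ≤ 1 := by
        rw [abs_of_nonneg hL.1]; exact hL.2
      rw [Real.norm_eq_abs, abs_mul, abs_mul, abs_mul]
      nlinarith [abs_nonneg (D ω - ∑ l', X ω l' * γ₀ l'), abs_nonneg (X ω l),
        abs_nonneg (logisticDeriv (D ω * θ₀ + ∑ l', X ω l' * β₀ l')),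
        mul_nonneg (abs_nonneg (D ω - ∑ l', X ω l' * γ₀ l')) (abs_nonneg (X ω l))]
    simp only [hptw]
    rw [integral_finset_sum _ (fun l _ => (hIl l).const_mul (β l - β₀ l))]
    refine Finset.sum_eq_zero fun l _ => ?_
    rw [integral_const_mul, horth l, mul_zero]
  have key := aux_main hm P (t := fun ω => D ω * θ₀ + ∑ l, X ω l * β₀ l)
    (u := fun ω => ∑ l, X ω l * (β l - β₀ l)) (v := fun ω => ∑ l, X ω l * (γ l - γ₀ l))
    (W := fun ω => D ω - ∑ l, X ω l * γ₀ l)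
    hY ht (hsumm _) (hsumm _) (hD.sub (hsumm γ₀)) hW𝒢 hv𝒢 hYb (hsum2 _) (hsum2 _) hW2
    hcond horth'
  have hfeq : (fun r : ℝ => ∫ ω,
        (Y ω - logistic (D ω * θ₀ + ∑ l, X ω l * (β₀ l + r * (β l - β₀ l)))) *
        (D ω - ∑ l, X ω l * (γ₀ l + r * (γ l - γ₀ l))) ∂P) =
      (fun r : ℝ => ∫ ω,
        (Y ω - logistic ((D ω * θ₀ + ∑ l, X ω l * β₀ l) + r * ∑ l, X ω l * (β l - β₀ l))) *
        ((D ω - ∑ l, X ω l * γ₀ l) - r * ∑ l, X ω l * (γ l - γ₀ l)) ∂P) := by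
    funext r
    congr 1
    funext ω
    have h1 : D ω * θ₀ + ∑ l, X ω l * (β₀ l + r * (β l - β₀ l)) =
        (D ω * θ₀ + ∑ l, X ω l * β₀ l) + r * ∑ l, X ω l * (β l - β₀ l) := by
      rw [Finset.sum_congr rfl (fun l (_ : l ∈ Finset.univ) =>
        show X ω l * (β₀ l + r * (β l - β₀ l)) = X ω l * β₀ l + r * (X ω l * (β l - β₀ l))
          from by ring), Finset.sum_add_distrib, ← Finset.mul_sum]
      ring
    have h2 : D ω - ∑ l, X ω l * (γ₀ l + r * (γ l - γ₀ l)) =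
        (D ω - ∑ l, X ω l * γ₀ l) - r * ∑ l, X ω l * (γ l - γ₀ l) := by
      rw [Finset.sum_congr rfl (fun l (_ : l ∈ Finset.univ) =>
        show X ω l * (γ₀ l + r * (γ l - γ₀ l)) = X ω l * γ₀ l + r * (X ω l * (γ l - γ₀ l))
          from by ring), Finset.sum_add_distrib, ← Finset.mul_sum]
      ring
    rw [h1, h2]
  rw [hfeq]
  exact ⟨key.1, key.2⟩
end

section
/- Let θ₀ ∈ ℝ, β₀, γ₀ ∈ ℝ^p, and C₁ ≥ 1. Assume: (a) 0 ≤ Y ≤ 1 almost surely; (b) E[ ((D, X)·ξ)⁴ ] ≤ C₁ for every unit vector ξ ∈ ℝ^{p+1}, where (D,X)·ξ := Dξ₁ + ⟨X, (ξ₂,…,ξ_{p+1})⟩; (c) ‖γ₀‖ ≤ C₁. Then there exists a constant C, depending only on C₁, such that for all θ ∈ ℝ and all β, γ ∈ ℝ^p, E[ ( ψ(θ, β, γ) − ψ(θ₀, β₀, γ₀) )² ] ≤ C · ( |θ−θ₀| ∨ ‖β−β₀‖ ∨ ‖γ−γ₀‖ )². -/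
open MeasureTheory ProbabilityTheory
open scoped ENNReal

lemma logistic_nonneg (t : ℝ) : 0 ≤ logistic t := by
  unfold logistic; positivity

lemma logistic_le_one (t : ℝ) : logistic t ≤ 1 := by
  unfold logistic
  rw [div_le_one (by positivity)]
  linarith

lemma logistic_lip_aux {a b : ℝ} (h : b ≤ a) :
    0 ≤ logistic a - logistic b ∧ logistic a - logistic b ≤ a - b := by
  have hu : (0:ℝ) < Real.exp a := Real.exp_pos a
  have hv : (0:ℝ) < Real.exp b := Real.exp_pos b
  have hvu : Real.exp b ≤ Real.exp a := Real.exp_le_exp.2 h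
  have hkey : Real.exp a - Real.exp b ≤ (a - b) * Real.exp a := by
    have := Real.add_one_le_exp (b - a)
    have h2 : (b - a + 1) * Real.exp a ≤ Real.exp (b - a) * Real.exp a :=
      mul_le_mul_of_nonneg_right this hu.le
    rw [← Real.exp_add] at h2
    have h3 : b - a + a = b := by ring
    rw [h3] at h2
    nlinarith
  have hd : logistic a - logistic b
      = (Real.exp a - Real.exp b) / ((1 + Real.exp a) * (1 + Real.exp b)) := by
    unfold logistic
    field_simp
    ring
  constructor
  · rw [hd]; exact div_nonneg (by linarith) (by positivity)
  · rw [hd, div_le_iff₀ (by positivity)]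
    nlinarith

lemma logistic_lipschitz (a b : ℝ) : |logistic a - logistic b| ≤ |a - b| := by
  rcases le_total b a with h | h
  · obtain ⟨h1, h2⟩ := logistic_lip_aux h
    rw [abs_of_nonneg h1]
    exact h2.trans (le_abs_self _)
  · obtain ⟨h1, h2⟩ := logistic_lip_aux h
    rw [abs_sub_comm, abs_of_nonneg h1, abs_sub_comm a b]
    exact h2.trans (le_abs_self _)

lemma key_pointwise (y la la0 d s s0 m : ℝ) (hy0 : 0 ≤ y) (hy1 : y ≤ 1)
    (hla0 : 0 ≤ la) (hla1 : la ≤ 1) (hm : |la0 - la| ≤ m) :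
    ((y - la) * (d - s) - (y - la0) * (d - s0)) ^ 2
      ≤ 2 * m ^ 2 * (d - s0) ^ 2 + 2 * (s - s0) ^ 2 := by
  have hu2 : (y - la) ^ 2 ≤ 1 := by nlinarith
  have hm2 : (la0 - la) ^ 2 ≤ m ^ 2 := by
    have := sq_abs (la0 - la)
    nlinarith [abs_nonneg (la0 - la)]
  have hid : (y - la) * (d - s) - (y - la0) * (d - s0)
      = (la0 - la) * (d - s0) + (y - la) * (s0 - s) := by ring
  rw [hid]
  have hA : ((la0 - la) * (d - s0)) ^ 2 ≤ m ^ 2 * (d - s0) ^ 2 := by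
    rw [mul_pow]; exact mul_le_mul_of_nonneg_right hm2 (sq_nonneg _)
  have hB : ((y - la) * (s0 - s)) ^ 2 ≤ (s - s0) ^ 2 := by
    rw [mul_pow]
    calc (y - la) ^ 2 * (s0 - s) ^ 2 ≤ 1 * (s0 - s) ^ 2 :=
          mul_le_mul_of_nonneg_right hu2 (sq_nonneg _)
      _ = (s - s0) ^ 2 := by ring
  nlinarith [sq_nonneg ((la0 - la) * (d - s0) - (y - la) * (s0 - s))]

/-- Concatenation of a scalar and a vector into `EuclideanSpace ℝ (Fin (p+1))`. -/
noncomputable def ecat {p : ℕ} (t : ℝ) (v : EuclideanSpace ℝ (Fin p)) :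
    EuclideanSpace ℝ (Fin (p + 1)) :=
  (WithLp.equiv 2 (Fin (p + 1) → ℝ)).symm (Fin.cons t v)

lemma ecat_zero {p : ℕ} (t : ℝ) (v : EuclideanSpace ℝ (Fin p)) : ecat t v 0 = t := by
  simp [ecat]

lemma ecat_succ {p : ℕ} (t : ℝ) (v : EuclideanSpace ℝ (Fin p)) (l : Fin p) :
    ecat t v l.succ = v l := by
  simp [ecat]

lemma ecat_norm_sq {p : ℕ} (t : ℝ) (v : EuclideanSpace ℝ (Fin p)) :
    ‖ecat t v‖ ^ 2 = t ^ 2 + ‖v‖ ^ 2 := by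
  rw [EuclideanSpace.norm_eq, Real.sq_sqrt (by positivity), EuclideanSpace.norm_eq,
    Real.sq_sqrt (by positivity)]
  rw [Fin.sum_univ_succ]
  simp [ecat, Real.norm_eq_abs, sq_abs]

lemma csum_bound {C₁ : ℝ} (hC₁ : 1 ≤ C₁) :
    4 * C₁ + (1 + C₁ ^ 2) ^ 2 * C₁ + C₁ + 1 ≤ 10 * C₁ ^ 5 := by
  have hC0 : (0:ℝ) < C₁ := by linarith
  have h2 : 1 ≤ C₁ ^ 2 := by nlinarith
  have h4 : 1 ≤ C₁ ^ 4 := by nlinarith [h2]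
  have e1 : C₁ ≤ C₁ ^ 5 := by nlinarith [h4, hC0]
  have e3 : C₁ ^ 3 ≤ C₁ ^ 5 := by nlinarith [h2, pow_pos hC0 3]
  have e0 : 1 ≤ C₁ ^ 5 := le_trans hC₁ e1
  nlinarith [e1, e3, e0]

lemma integrable_pow_four {Ω : Type*} [MeasurableSpace Ω] {P : Measure Ω} {f : Ω → ℝ}
    (hf : MemLp f 4 P) : Integrable (fun ω => f ω ^ 4) P := by
  have h := hf.integrable_norm_rpow (by norm_num) (by norm_num)
  have heq : (fun ω => ‖f ω‖ ^ (4 : ℝ≥0∞).toReal) = fun ω => f ω ^ 4 := by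
    funext ω
    rw [show ((4 : ℝ≥0∞)).toReal = ((4 : ℕ) : ℝ) by simp]
    rw [Real.rpow_natCast, Real.norm_eq_abs, ← abs_pow, abs_of_nonneg (by positivity)]
  rwa [heq] at h

lemma moment_all {Ω : Type*} [MeasurableSpace Ω] (P : Measure Ω) {p : ℕ}
    (D : Ω → ℝ) (X : Ω → EuclideanSpace ℝ (Fin p)) (C₁ : ℝ)
    (hmom : ∀ ξ : EuclideanSpace ℝ (Fin (p + 1)), ‖ξ‖ = 1 →
      MemLp (fun ω => D ω * ξ 0 + ∑ l : Fin p, X ω l * ξ l.succ) 4 P ∧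
      ∫ ω, (D ω * ξ 0 + ∑ l : Fin p, X ω l * ξ l.succ) ^ 4 ∂P ≤ C₁) :
    ∀ ξ : EuclideanSpace ℝ (Fin (p + 1)),
      MemLp (fun ω => D ω * ξ 0 + ∑ l : Fin p, X ω l * ξ l.succ) 4 P ∧
      ∫ ω, (D ω * ξ 0 + ∑ l : Fin p, X ω l * ξ l.succ) ^ 4 ∂P ≤ ‖ξ‖ ^ 4 * C₁ := by
  intro ξ
  by_cases hξ : ξ = 0
  · subst hξ
    have hz : (fun ω => D ω * (0 : EuclideanSpace ℝ (Fin (p+1))) 0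
        + ∑ l : Fin p, X ω l * (0 : EuclideanSpace ℝ (Fin (p+1))) l.succ) = fun _ => (0:ℝ) := by
      funext ω; simp
    constructor
    · have hz' : (fun ω => D ω * (0 : EuclideanSpace ℝ (Fin (p+1))) 0
          + ∑ l : Fin p, X ω l * (0 : EuclideanSpace ℝ (Fin (p+1))) l.succ) = (0 : Ω → ℝ) := by
        funext ω; simp
      rw [hz']
      exact MemLp.zero
    · have hz4 : (fun ω => (D ω * (0 : EuclideanSpace ℝ (Fin (p+1))) 0
          + ∑ l : Fin p, X ω l * (0 : EuclideanSpace ℝ (Fin (p+1))) l.succ) ^ 4)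
          = fun _ : Ω => (0:ℝ) := by
        funext ω; simp
      rw [show (∫ ω, (D ω * (0 : EuclideanSpace ℝ (Fin (p+1))) 0
          + ∑ l : Fin p, X ω l * (0 : EuclideanSpace ℝ (Fin (p+1))) l.succ) ^ 4 ∂P)
          = ∫ _ω : Ω, (0:ℝ) ∂P from by rw [hz4]]
      simp
  · have hc : (0:ℝ) < ‖ξ‖ := norm_pos_iff.2 hξ
    set c : ℝ := ‖ξ‖ with hcdef
    set η : EuclideanSpace ℝ (Fin (p + 1)) := c⁻¹ • ξ with hη
    have hη1 : ‖η‖ = 1 := by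
      rw [hη, norm_smul, norm_inv, norm_norm]
      field_simp
    have heq : (fun ω => D ω * ξ 0 + ∑ l : Fin p, X ω l * ξ l.succ)
        = fun ω => c * (D ω * η 0 + ∑ l : Fin p, X ω l * η l.succ) := by
      funext ω
      simp only [hη, PiLp.smul_apply, smul_eq_mul]
      rw [mul_add, Finset.mul_sum]
      have hcne : c ≠ 0 := ne_of_gt hc
      field_simp
    obtain ⟨hm, hi⟩ := hmom η hη1
    constructor
    · rw [heq]; exact hm.const_mul c
    · have heq4 : (fun ω => (D ω * ξ 0 + ∑ l : Fin p, X ω l * ξ l.succ) ^ 4)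
          = fun ω => c ^ 4 * (D ω * η 0 + ∑ l : Fin p, X ω l * η l.succ) ^ 4 := by
        funext ω
        rw [congrFun heq ω, mul_pow]
      rw [show (∫ ω, (D ω * ξ 0 + ∑ l : Fin p, X ω l * ξ l.succ) ^ 4 ∂P)
          = ∫ ω, c ^ 4 * (D ω * η 0 + ∑ l : Fin p, X ω l * η l.succ) ^ 4 ∂P from by rw [heq4],
        integral_const_mul]
      calc c ^ 4 * ∫ ω, (D ω * η 0 + ∑ l : Fin p, X ω l * η l.succ) ^ 4 ∂P
          ≤ c ^ 4 * C₁ := mul_le_mul_of_nonneg_left hi (by positivity)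
        _ = ‖ξ‖ ^ 4 * C₁ := by rw [hcdef]

set_option maxHeartbeats 1600000 in
/-- Mean-square continuity of the logistic dyadic link formation score in the
parameters (θ, β, γ), with a constant depending only on C₁. -/
theorem logit_score_mean_square_continuity
    {Ω : Type*} [MeasurableSpace Ω] (P : Measure Ω) [IsProbabilityMeasure P]
    {p : ℕ} (Y D : Ω → ℝ) (X : Ω → EuclideanSpace ℝ (Fin p))
    (hY : Measurable Y) (hD : Measurable D) (hX : Measurable X)
    (θ₀ : ℝ) (β₀ γ₀ : EuclideanSpace ℝ (Fin p)) (C₁ : ℝ) (hC₁ : 1 ≤ C₁)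
    (hYb : ∀ᵐ ω ∂P, 0 ≤ Y ω ∧ Y ω ≤ 1)
    (hmom : ∀ ξ : EuclideanSpace ℝ (Fin (p + 1)), ‖ξ‖ = 1 →
      MemLp (fun ω => D ω * ξ 0 + ∑ l : Fin p, X ω l * ξ l.succ) 4 P ∧
      ∫ ω, (D ω * ξ 0 + ∑ l : Fin p, X ω l * ξ l.succ) ^ 4 ∂P ≤ C₁)
    (hγ₀ : ‖γ₀‖ ≤ C₁) :
    ∃ C : ℝ, 0 < C ∧ ∀ (θ : ℝ) (β γ : EuclideanSpace ℝ (Fin p)),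
      ∫ ω, ((Y ω - logistic (D ω * θ + ∑ l, X ω l * β l)) *
              (D ω - ∑ l, X ω l * γ l)
            - (Y ω - logistic (D ω * θ₀ + ∑ l, X ω l * β₀ l)) *
              (D ω - ∑ l, X ω l * γ₀ l)) ^ 2 ∂P
        ≤ C * (max |θ - θ₀| (max ‖β - β₀‖ ‖γ - γ₀‖)) ^ 2 := by
  have hmom' := moment_all P D X C₁ hmom
  refine ⟨10 * C₁ ^ 5, by positivity, ?_⟩
  intro θ β γ
  set r : ℝ := max |θ - θ₀| (max ‖β - β₀‖ ‖γ - γ₀‖) with hrdef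
  have hr0 : 0 ≤ r := le_trans (abs_nonneg _) (le_max_left _ _)
  have hrθ : |θ - θ₀| ≤ r := le_max_left _ _
  have hrβ : ‖β - β₀‖ ≤ r := le_trans (le_max_left _ _) (le_max_right _ _)
  have hrγ : ‖γ - γ₀‖ ≤ r := le_trans (le_max_right _ _) (le_max_right _ _)
  rcases eq_or_lt_of_le hr0 with hr | hr
  · -- r = 0 : all parameters coincide
    have hθ : θ = θ₀ := by
      have : |θ - θ₀| ≤ 0 := hr ▸ hrθ
      have := abs_nonpos_iff.1 this
      linarith [sub_eq_zero.1 this]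
    have hβ : β = β₀ := by
      have : ‖β - β₀‖ ≤ 0 := hr ▸ hrβ
      exact sub_eq_zero.1 (norm_le_zero_iff.1 this)
    have hγ : γ = γ₀ := by
      have : ‖γ - γ₀‖ ≤ 0 := hr ▸ hrγ
      exact sub_eq_zero.1 (norm_le_zero_iff.1 this)
    subst hθ; subst hβ; subst hγ
    have hC0 : (0:ℝ) < C₁ := by linarith
    simp only [sub_self]
    have h0 : ∫ (_ω : Ω), (0:ℝ) ^ 2 ∂P = 0 := by simp
    rw [h0]
    nlinarith [pow_pos hC0 5, sq_nonneg r]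
  · -- r > 0
    set ζ₁ : EuclideanSpace ℝ (Fin (p + 1)) := ecat (θ - θ₀) (β - β₀) with hζ₁
    set ζ₂ : EuclideanSpace ℝ (Fin (p + 1)) := ecat 1 (-γ₀) with hζ₂
    set ζ₃ : EuclideanSpace ℝ (Fin (p + 1)) := ecat 0 (γ - γ₀) with hζ₃
    set Z₁ : Ω → ℝ := fun ω => D ω * ζ₁ 0 + ∑ l : Fin p, X ω l * ζ₁ l.succ with hZ₁def
    set Z₂ : Ω → ℝ := fun ω => D ω * ζ₂ 0 + ∑ l : Fin p, X ω l * ζ₂ l.succ with hZ₂def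
    set Z₃ : Ω → ℝ := fun ω => D ω * ζ₃ 0 + ∑ l : Fin p, X ω l * ζ₃ l.succ with hZ₃def
    have hZ₁ : ∀ ω, Z₁ ω = (D ω * θ + ∑ l, X ω l * β l) - (D ω * θ₀ + ∑ l, X ω l * β₀ l) := by
      intro ω
      simp only [hZ₁def, hζ₁, ecat_zero, ecat_succ, PiLp.sub_apply, mul_sub,
        Finset.sum_sub_distrib]
      ring
    have hZ₂ : ∀ ω, Z₂ ω = D ω - ∑ l, X ω l * γ₀ l := by
      intro ω
      simp only [hZ₂def, hζ₂, ecat_zero, ecat_succ, PiLp.neg_apply, mul_neg, mul_one,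
        Finset.sum_neg_distrib]
      ring
    have hZ₃ : ∀ ω, Z₃ ω = (∑ l, X ω l * γ l) - ∑ l, X ω l * γ₀ l := by
      intro ω
      simp only [hZ₃def, hζ₃, ecat_zero, ecat_succ, PiLp.sub_apply, mul_sub, mul_zero,
        Finset.sum_sub_distrib]
      ring
    -- norm bounds
    have hn₁ : ‖ζ₁‖ ^ 4 ≤ 4 * r ^ 4 := by
      have h2 : ‖ζ₁‖ ^ 2 ≤ 2 * r ^ 2 := by
        rw [hζ₁, ecat_norm_sq]
        have hθ2 : (θ - θ₀) ^ 2 ≤ r ^ 2 := by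
          rw [← sq_abs]
          exact pow_le_pow_left₀ (abs_nonneg _) hrθ 2
        have hβ2 : ‖β - β₀‖ ^ 2 ≤ r ^ 2 := pow_le_pow_left₀ (norm_nonneg _) hrβ 2
        linarith
      nlinarith [sq_nonneg ‖ζ₁‖, sq_nonneg r]
    have hn₂ : ‖ζ₂‖ ^ 4 ≤ (1 + C₁ ^ 2) ^ 2 := by
      have h2 : ‖ζ₂‖ ^ 2 ≤ 1 + C₁ ^ 2 := by
        rw [hζ₂, ecat_norm_sq, norm_neg]
        have : ‖γ₀‖ ^ 2 ≤ C₁ ^ 2 := pow_le_pow_left₀ (norm_nonneg _) hγ₀ 2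
        nlinarith
      nlinarith [sq_nonneg ‖ζ₂‖]
    have hn₃ : ‖ζ₃‖ ^ 4 ≤ r ^ 4 := by
      have h2 : ‖ζ₃‖ ^ 2 ≤ r ^ 2 := by
        rw [hζ₃, ecat_norm_sq]
        have : ‖γ - γ₀‖ ^ 2 ≤ r ^ 2 := pow_le_pow_left₀ (norm_nonneg _) hrγ 2
        nlinarith
      nlinarith [sq_nonneg ‖ζ₃‖, sq_nonneg r]
    obtain ⟨hM₁, hI₁⟩ := hmom' ζ₁
    obtain ⟨hM₂, hI₂⟩ := hmom' ζ₂
    obtain ⟨hM₃, hI₃⟩ := hmom' ζ₃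
    have hC₁0 : (0:ℝ) ≤ C₁ := by linarith
    have hI₁' : ∫ ω, Z₁ ω ^ 4 ∂P ≤ 4 * r ^ 4 * C₁ :=
      hI₁.trans (mul_le_mul_of_nonneg_right hn₁ hC₁0)
    have hI₂' : ∫ ω, Z₂ ω ^ 4 ∂P ≤ (1 + C₁ ^ 2) ^ 2 * C₁ :=
      hI₂.trans (mul_le_mul_of_nonneg_right hn₂ hC₁0)
    have hI₃' : ∫ ω, Z₃ ω ^ 4 ∂P ≤ r ^ 4 * C₁ :=
      hI₃.trans (mul_le_mul_of_nonneg_right hn₃ hC₁0)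
    have hint₁ : Integrable (fun ω => Z₁ ω ^ 4) P := integrable_pow_four hM₁
    have hint₂ : Integrable (fun ω => Z₂ ω ^ 4) P := integrable_pow_four hM₂
    have hint₃ : Integrable (fun ω => Z₃ ω ^ 4) P := integrable_pow_four hM₃
    -- the dominating function
    set B : Ω → ℝ := fun ω =>
      r⁻¹ ^ 2 * Z₁ ω ^ 4 + r ^ 2 * Z₂ ω ^ 4 + (r⁻¹ ^ 2 * Z₃ ω ^ 4 + r ^ 2) with hBdef
    have hBint : Integrable B P := by
      exact ((hint₁.const_mul _).add (hint₂.const_mul _)).add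
        ((hint₃.const_mul _).add (integrable_const _))
    have hae : ∀ᵐ ω ∂P,
        ((Y ω - logistic (D ω * θ + ∑ l, X ω l * β l)) * (D ω - ∑ l, X ω l * γ l)
          - (Y ω - logistic (D ω * θ₀ + ∑ l, X ω l * β₀ l)) *
            (D ω - ∑ l, X ω l * γ₀ l)) ^ 2 ≤ B ω := by
      filter_upwards [hYb] with ω hYω
      obtain ⟨hy0, hy1⟩ := hYω
      set a : ℝ := D ω * θ + ∑ l, X ω l * β l with ha
      set a₀ : ℝ := D ω * θ₀ + ∑ l, X ω l * β₀ l with ha₀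
      have hlip : |logistic a₀ - logistic a| ≤ |Z₁ ω| := by
        have habs : |a₀ - a| = |Z₁ ω| := by rw [hZ₁ ω, abs_sub_comm]
        exact (logistic_lipschitz a₀ a).trans_eq habs
      have hkey := key_pointwise (Y ω) (logistic a) (logistic a₀) (D ω)
        (∑ l, X ω l * γ l) (∑ l, X ω l * γ₀ l) (|Z₁ ω|) hy0 hy1
        (logistic_nonneg a) (logistic_le_one a) hlip
      have h1 : 2 * |Z₁ ω| ^ 2 * (D ω - ∑ l, X ω l * γ₀ l) ^ 2
          = 2 * Z₁ ω ^ 2 * Z₂ ω ^ 2 := by rw [sq_abs, hZ₂ ω]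
      have h2 : ((∑ l, X ω l * γ l) - ∑ l, X ω l * γ₀ l) ^ 2 = Z₃ ω ^ 2 := by
        rw [hZ₃ ω]
      rw [h1, h2] at hkey
      refine hkey.trans ?_
      have hinv : r⁻¹ * r = 1 := inv_mul_cancel₀ (ne_of_gt hr)
      have am1 : 2 * Z₁ ω ^ 2 * Z₂ ω ^ 2 ≤ r⁻¹ ^ 2 * Z₁ ω ^ 4 + r ^ 2 * Z₂ ω ^ 4 := by
        have h := sq_nonneg (r⁻¹ * Z₁ ω ^ 2 - r * Z₂ ω ^ 2)
        have hexp : (r⁻¹ * Z₁ ω ^ 2 - r * Z₂ ω ^ 2) ^ 2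
            = r⁻¹ ^ 2 * Z₁ ω ^ 4 + r ^ 2 * Z₂ ω ^ 4
              - 2 * (r⁻¹ * r) * (r⁻¹ * r) * (Z₁ ω ^ 2 * Z₂ ω ^ 2)
              + (2 * (r⁻¹ * r) * (r⁻¹ * r) - 2 * (r⁻¹ * r)) * (Z₁ ω ^ 2 * Z₂ ω ^ 2) := by
          ring
        rw [hexp, hinv] at h
        nlinarith [h]
      have am2 : 2 * Z₃ ω ^ 2 ≤ r⁻¹ ^ 2 * Z₃ ω ^ 4 + r ^ 2 := by
        have h := sq_nonneg (r⁻¹ * Z₃ ω ^ 2 - r)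
        have hexp : (r⁻¹ * Z₃ ω ^ 2 - r) ^ 2
            = r⁻¹ ^ 2 * Z₃ ω ^ 4 + r ^ 2 - 2 * (r⁻¹ * r) * Z₃ ω ^ 2 := by ring
        rw [hexp, hinv] at h
        nlinarith [h]
      simp only [hBdef]
      linarith
    have hmono : ∫ ω, ((Y ω - logistic (D ω * θ + ∑ l, X ω l * β l)) *
              (D ω - ∑ l, X ω l * γ l)
            - (Y ω - logistic (D ω * θ₀ + ∑ l, X ω l * β₀ l)) *
              (D ω - ∑ l, X ω l * γ₀ l)) ^ 2 ∂P ≤ ∫ ω, B ω ∂P :=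
      integral_mono_of_nonneg (Filter.Eventually.of_forall fun ω => sq_nonneg _) hBint hae
    have hBval : ∫ ω, B ω ∂P
        = r⁻¹ ^ 2 * ∫ ω, Z₁ ω ^ 4 ∂P + r ^ 2 * ∫ ω, Z₂ ω ^ 4 ∂P
          + (r⁻¹ ^ 2 * ∫ ω, Z₃ ω ^ 4 ∂P + r ^ 2) := by
      have hBi1 : Integrable (fun ω => r⁻¹ ^ 2 * Z₁ ω ^ 4 + r ^ 2 * Z₂ ω ^ 4) P :=
        (hint₁.const_mul _).add (hint₂.const_mul _)
      have hBi2 : Integrable (fun ω => r⁻¹ ^ 2 * Z₃ ω ^ 4 + r ^ 2) P :=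
        (hint₃.const_mul _).add (integrable_const _)
      have hc1 : Integrable (fun ω => r⁻¹ ^ 2 * Z₁ ω ^ 4) P := hint₁.const_mul _
      have hc2 : Integrable (fun ω => r ^ 2 * Z₂ ω ^ 4) P := hint₂.const_mul _
      have hc3 : Integrable (fun ω => r⁻¹ ^ 2 * Z₃ ω ^ 4) P := hint₃.const_mul _
      simp only [hBdef]
      rw [integral_add hBi1 hBi2, integral_add hc1 hc2, integral_add hc3 (integrable_const _),
        integral_const_mul, integral_const_mul, integral_const_mul, integral_const]
      simp
    have hrr : r⁻¹ ^ 2 * r ^ 4 = r ^ 2 := by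
      rw [inv_pow, inv_mul_eq_div, div_eq_iff (pow_ne_zero 2 (ne_of_gt hr))]
      ring
    have hfinal : ∫ ω, B ω ∂P ≤ 10 * C₁ ^ 5 * r ^ 2 := by
      rw [hBval]
      have hb₁ : r⁻¹ ^ 2 * ∫ ω, Z₁ ω ^ 4 ∂P ≤ 4 * C₁ * r ^ 2 := by
        calc r⁻¹ ^ 2 * ∫ ω, Z₁ ω ^ 4 ∂P ≤ r⁻¹ ^ 2 * (4 * r ^ 4 * C₁) :=
              mul_le_mul_of_nonneg_left hI₁' (by positivity)
          _ = 4 * C₁ * (r⁻¹ ^ 2 * r ^ 4) := by ring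
          _ = 4 * C₁ * r ^ 2 := by rw [hrr]
      have hb₂ : r ^ 2 * ∫ ω, Z₂ ω ^ 4 ∂P ≤ (1 + C₁ ^ 2) ^ 2 * C₁ * r ^ 2 := by
        calc r ^ 2 * ∫ ω, Z₂ ω ^ 4 ∂P ≤ r ^ 2 * ((1 + C₁ ^ 2) ^ 2 * C₁) :=
              mul_le_mul_of_nonneg_left hI₂' (by positivity)
          _ = (1 + C₁ ^ 2) ^ 2 * C₁ * r ^ 2 := by ring
      have hb₃ : r⁻¹ ^ 2 * ∫ ω, Z₃ ω ^ 4 ∂P ≤ C₁ * r ^ 2 := by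
        calc r⁻¹ ^ 2 * ∫ ω, Z₃ ω ^ 4 ∂P ≤ r⁻¹ ^ 2 * (r ^ 4 * C₁) :=
              mul_le_mul_of_nonneg_left hI₃' (by positivity)
          _ = C₁ * (r⁻¹ ^ 2 * r ^ 4) := by ring
          _ = C₁ * r ^ 2 := by rw [hrr]
      have hCsum := csum_bound hC₁
      have hmul : 4 * C₁ * r ^ 2 + (1 + C₁ ^ 2) ^ 2 * C₁ * r ^ 2 + C₁ * r ^ 2 + r ^ 2
          ≤ 10 * C₁ ^ 5 * r ^ 2 := by
        calc 4 * C₁ * r ^ 2 + (1 + C₁ ^ 2) ^ 2 * C₁ * r ^ 2 + C₁ * r ^ 2 + r ^ 2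
            = (4 * C₁ + (1 + C₁ ^ 2) ^ 2 * C₁ + C₁ + 1) * r ^ 2 := by ring
          _ ≤ 10 * C₁ ^ 5 * r ^ 2 := mul_le_mul_of_nonneg_right hCsum (sq_nonneg r)
      linarith [hb₁, hb₂, hb₃, hmul]
    exact hmono.trans hfinal
end

section
/- Let θ₀ ∈ ℝ, β₀, γ₀ ∈ ℝ^p, and C₁ ≥ 1. Assume: (a) 0 ≤ Y ≤ 1 almost surely; (b) E[ ((D, X)·ξ)⁴ ] ≤ C₁ for every unit vector ξ ∈ ℝ^{p+1}; (c) ‖γ₀‖ ≤ C₁. For θ ∈ ℝ, β, γ ∈ ℝ^p and r ∈ [0,1], set Ξ_r := Dθ + ⟨X, β₀ + r(β−β₀)⟩ and g_r := −(Y − Λ(Ξ_r))·⟨X, γ−γ₀⟩ − Λ'(Ξ_r)·(D − ⟨X, γ₀ + r(γ−γ₀)⟩)·⟨X, β−β₀⟩ (the pointwise derivative in r of the score along the nuisance path). Then there exists a constant C, depending only on C₁, such that for all θ ∈ ℝ, all r ∈ [0,1], and all β, γ ∈ ℝ^p with ‖γ−γ₀‖ ≤ 1, |E[g_r]| ≤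 C·( ‖β−β₀‖ + ‖γ−γ₀‖ ). -/
open MeasureTheory ProbabilityTheory

lemma logisticDeriv_abs_le (t : ℝ) : |logisticDeriv t| ≤ 1 := by
  have h1 := logistic_pos t; have h2 := logistic_lt_one t
  rw [logisticDeriv, abs_le]; constructor <;> nlinarith

/-- Linear form ⟨X ω, v⟩. -/
noncomputable def linS {Ω : Type*} {p : ℕ} (X : Ω → EuclideanSpace ℝ (Fin p))
    (v : EuclideanSpace ℝ (Fin p)) (ω : Ω) : ℝ := ∑ l, X ω l * v l

section Aux
variable {Ω : Type*} [MeasurableSpace Ω] {P : Measure Ω} [IsProbabilityMeasure P]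
  {p : ℕ} {X : Ω → EuclideanSpace ℝ (Fin p)} {D : Ω → ℝ} {C₁ : ℝ}

lemma linS_meas (hX : Measurable X) (v : EuclideanSpace ℝ (Fin p)) :
    Measurable (linS X v) :=
  Finset.measurable_sum _ fun l _ => ((measurable_pi_apply l).comp ((WithLp.measurable_ofLp _ _).comp hX)).mul_const _

omit [MeasurableSpace Ω] in
lemma linS_smul (X : Ω → EuclideanSpace ℝ (Fin p)) (c : ℝ) (v : EuclideanSpace ℝ (Fin p)) :
    linS X (c • v) = fun ω => c * linS X v ω := by
  funext ω
  simp [linS, Finset.mul_sum, PiLp.smul_apply, smul_eq_mul]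
  exact Finset.sum_congr rfl fun l _ => by ring

lemma quartic {f : Ω → ℝ} (hf : Measurable f)
    (h4 : MemLp f 4 P) {B : ℝ} (hB : ∫ ω, f ω ^ 4 ∂P ≤ B) :
    Integrable f P ∧ Integrable (fun ω => (f ω)^2) P ∧
    (∫ ω, |f ω| ∂P ≤ 1 + B) ∧ (∫ ω, (f ω)^2 ∂P ≤ 1 + B) := by
  have hi4 : Integrable (fun ω => f ω ^ 4) P := by
    have h := h4.integrable_norm_rpow (by norm_num) (by norm_num)
    refine h.congr (Filter.Eventually.of_forall fun ω => ?_)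
    show ‖f ω‖ ^ (4:ENNReal).toReal = f ω ^ 4
    rw [Real.norm_eq_abs, show ((4:ENNReal)).toReal = ((4:ℕ):ℝ) by norm_num,
      Real.rpow_natCast, Even.pow_abs ⟨2, by norm_num⟩]
  have hidom : Integrable (fun ω => 1 + f ω ^ 4) P := (integrable_const 1).add hi4
  have hint : ∫ ω, (1 + f ω ^ 4) ∂P = 1 + ∫ ω, f ω ^ 4 ∂P := by
    rw [integral_add (integrable_const 1) hi4, integral_const]; simp
  refine ⟨h4.integrable (by norm_num), ?_, ?_, ?_⟩
  · refine hidom.mono' ((hf.pow_const 2).aestronglyMeasurable)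
      (Filter.Eventually.of_forall fun ω => ?_)
    rw [Real.norm_eq_abs, abs_of_nonneg (sq_nonneg _)]
    nlinarith [sq_nonneg (f ω ^ 2 - 1), sq_nonneg (f ω)]
  · calc ∫ ω, |f ω| ∂P ≤ ∫ ω, (1 + f ω ^ 4) ∂P := by
          refine integral_mono_of_nonneg (Filter.Eventually.of_forall fun ω => abs_nonneg _)
            hidom (Filter.Eventually.of_forall fun ω => ?_)
          dsimp only
          rcases le_or_gt (|f ω|) 1 with h | h
          · nlinarith [sq_nonneg (f ω ^ 2), abs_nonneg (f ω)]
          · nlinarith [sq_abs (f ω), abs_nonneg (f ω), sq_nonneg (|f ω| - 1),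
              sq_nonneg (|f ω|^2 - 1)]
      _ ≤ 1 + B := by rw [hint]; linarith
  · calc ∫ ω, (f ω)^2 ∂P ≤ ∫ ω, (1 + f ω ^ 4) ∂P := by
          refine integral_mono_of_nonneg (Filter.Eventually.of_forall fun ω => sq_nonneg _)
            hidom (Filter.Eventually.of_forall fun ω => ?_)
          dsimp only
          nlinarith [sq_nonneg (f ω ^ 2 - 1), sq_nonneg (f ω)]
      _ ≤ 1 + B := by rw [hint]; linarith

lemma keymom
    (hmom : ∀ ξ : EuclideanSpace ℝ (Fin (p + 1)), ‖ξ‖ = 1 →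
      MemLp (fun ω => D ω * ξ 0 + ∑ l : Fin p, X ω l * ξ l.succ) 4 P ∧
      ∫ ω, (D ω * ξ 0 + ∑ l : Fin p, X ω l * ξ l.succ) ^ 4 ∂P ≤ C₁)
    (v : EuclideanSpace ℝ (Fin p)) (hv : ‖v‖ = 1) :
    MemLp (linS X v) 4 P ∧ ∫ ω, (linS X v ω)^4 ∂P ≤ C₁ := by
  set ξ : EuclideanSpace ℝ (Fin (p+1)) :=
    (WithLp.equiv 2 (Fin (p+1) → ℝ)).symm (Fin.cons 0 ((WithLp.equiv 2 (Fin p → ℝ)) v)) with hξ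
  have hξ0 : ξ 0 = 0 := by simp [hξ, WithLp.equiv_symm_apply, PiLp.toLp_apply]
  have hξs : ∀ l : Fin p, ξ l.succ = v l := fun l => by
    simp [hξ, WithLp.equiv_symm_apply, PiLp.toLp_apply, WithLp.equiv_apply]
  have hnξ : ‖ξ‖ = 1 := by
    rw [EuclideanSpace.norm_eq]
    rw [EuclideanSpace.norm_eq] at hv
    rw [show (∑ i, ‖ξ i‖ ^ 2) = ∑ l : Fin p, ‖v l‖ ^ 2 by
      rw [Fin.sum_univ_succ, hξ0]
      simp [hξs]]
    exact hv
  have h := hmom ξ hnξ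
  simp only [hξ0, hξs, mul_zero, zero_add] at h
  exact h

lemma Dmom (hC₁ : 1 ≤ C₁)
    (hmom : ∀ ξ : EuclideanSpace ℝ (Fin (p + 1)), ‖ξ‖ = 1 →
      MemLp (fun ω => D ω * ξ 0 + ∑ l : Fin p, X ω l * ξ l.succ) 4 P ∧
      ∫ ω, (D ω * ξ 0 + ∑ l : Fin p, X ω l * ξ l.succ) ^ 4 ∂P ≤ C₁) :
    MemLp D 4 P ∧ ∫ ω, (D ω)^4 ∂P ≤ C₁ := by
  have h := hmom (EuclideanSpace.single 0 1) (by simp [EuclideanSpace.norm_single])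
  have h0 : (EuclideanSpace.single (0 : Fin (p+1)) (1:ℝ)) 0 = 1 := by
    simp [EuclideanSpace.single_apply]
  have hs : ∀ l : Fin p, (EuclideanSpace.single (0 : Fin (p+1)) (1:ℝ)) l.succ = 0 := fun l => by
    simp [EuclideanSpace.single_apply, (Fin.succ_ne_zero l)]
  simp only [h0, hs, mul_one, mul_zero, Finset.sum_const_zero, add_zero] at h
  exact h

lemma unit_decomp {v : EuclideanSpace ℝ (Fin p)} (hv : v ≠ 0) :
    ‖(‖v‖⁻¹ • v)‖ = 1 ∧ v = ‖v‖ • (‖v‖⁻¹ • v) := by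
  have h0 : ‖v‖ ≠ 0 := norm_ne_zero_iff.2 hv
  constructor
  · rw [norm_smul, Real.norm_eq_abs, abs_inv, abs_norm, inv_mul_cancel₀ h0]
  · rw [smul_smul, mul_inv_cancel₀ h0, one_smul]

lemma absPart (hC₁ : 1 ≤ C₁) (hX : Measurable X)
    (hmom : ∀ ξ : EuclideanSpace ℝ (Fin (p + 1)), ‖ξ‖ = 1 →
      MemLp (fun ω => D ω * ξ 0 + ∑ l : Fin p, X ω l * ξ l.succ) 4 P ∧
      ∫ ω, (D ω * ξ 0 + ∑ l : Fin p, X ω l * ξ l.succ) ^ 4 ∂P ≤ C₁)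
    (v : EuclideanSpace ℝ (Fin p)) :
    Integrable (fun ω => |linS X v ω|) P ∧ ∫ ω, |linS X v ω| ∂P ≤ 2 * C₁ * ‖v‖ := by
  rcases eq_or_ne v 0 with rfl | hv
  · have h0 : (fun ω => |linS X (0 : EuclideanSpace ℝ (Fin p)) ω|) = fun _ => (0:ℝ) := by
      funext ω; simp [linS]
    rw [h0]; simp
  · obtain ⟨hu1, hvu⟩ := unit_decomp hv
    set u := ‖v‖⁻¹ • v
    have hk := keymom hmom u hu1
    obtain ⟨hint, _, habs, _⟩ := quartic (linS_meas hX u) hk.1 hk.2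
    have hlin : linS X v = fun ω => ‖v‖ * linS X u ω := by
      conv_lhs => rw [hvu]
      rw [linS_smul]
    have hrw : (fun ω => |linS X v ω|) = fun ω => ‖v‖ * |linS X u ω| := by
      funext ω
      rw [hlin, abs_mul, abs_of_nonneg (norm_nonneg v)]
    rw [hrw]
    constructor
    · exact hint.abs.const_mul _
    · rw [integral_const_mul]
      calc ‖v‖ * ∫ ω, |linS X u ω| ∂P ≤ ‖v‖ * (1 + C₁) := by
            exact mul_le_mul_of_nonneg_left habs (norm_nonneg v)
        _ ≤ 2 * C₁ * ‖v‖ := by nlinarith [norm_nonneg v]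

lemma sqPart (hC₁ : 1 ≤ C₁) (hX : Measurable X)
    (hmom : ∀ ξ : EuclideanSpace ℝ (Fin (p + 1)), ‖ξ‖ = 1 →
      MemLp (fun ω => D ω * ξ 0 + ∑ l : Fin p, X ω l * ξ l.succ) 4 P ∧
      ∫ ω, (D ω * ξ 0 + ∑ l : Fin p, X ω l * ξ l.succ) ^ 4 ∂P ≤ C₁)
    (v : EuclideanSpace ℝ (Fin p)) :
    Integrable (fun ω => (linS X v ω)^2) P ∧ ∫ ω, (linS X v ω)^2 ∂P ≤ 2 * C₁ * ‖v‖^2 := by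
  rcases eq_or_ne v 0 with rfl | hv
  · have h0 : (fun ω => (linS X (0 : EuclideanSpace ℝ (Fin p)) ω)^2) = fun _ => (0:ℝ) := by
      funext ω; simp [linS]
    rw [h0]; simp
  · obtain ⟨hu1, hvu⟩ := unit_decomp hv
    set u := ‖v‖⁻¹ • v
    have hk := keymom hmom u hu1
    obtain ⟨_, hsq, _, hsqb⟩ := quartic (linS_meas hX u) hk.1 hk.2
    have hlin : linS X v = fun ω => ‖v‖ * linS X u ω := by
      conv_lhs => rw [hvu]
      rw [linS_smul]
    have hrw : (fun ω => (linS X v ω)^2) = fun ω => ‖v‖^2 * (linS X u ω)^2 := by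
      funext ω
      rw [hlin]; ring
    rw [hrw]
    constructor
    · exact hsq.const_mul _
    · rw [integral_const_mul]
      calc ‖v‖^2 * ∫ ω, (linS X u ω)^2 ∂P ≤ ‖v‖^2 * (1 + C₁) :=
            mul_le_mul_of_nonneg_left hsqb (sq_nonneg _)
        _ ≤ 2 * C₁ * ‖v‖^2 := by nlinarith [sq_nonneg ‖v‖]

lemma prodPart (hC₁ : 1 ≤ C₁) (hX : Measurable X) (hD : Measurable D)
    (hmom : ∀ ξ : EuclideanSpace ℝ (Fin (p + 1)), ‖ξ‖ = 1 →
      MemLp (fun ω => D ω * ξ 0 + ∑ l : Fin p, X ω l * ξ l.succ) 4 P ∧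
      ∫ ω, (D ω * ξ 0 + ∑ l : Fin p, X ω l * ξ l.succ) ^ 4 ∂P ≤ C₁)
    (w v : EuclideanSpace ℝ (Fin p)) (hw : ‖w‖ ≤ 2 * C₁) :
    Integrable (fun ω => |D ω - linS X w ω| * |linS X v ω|) P ∧
    ∫ ω, |D ω - linS X w ω| * |linS X v ω| ∂P ≤ 11 * C₁^3 * ‖v‖ := by
  rcases eq_or_ne v 0 with rfl | hv
  · have h0 : (fun ω => |D ω - linS X w ω| * |linS X (0 : EuclideanSpace ℝ (Fin p)) ω|)
        = fun _ => (0:ℝ) := by funext ω; simp [linS]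
    rw [h0]; simp
  · obtain ⟨hu1, hvu⟩ := unit_decomp hv
    set u := ‖v‖⁻¹ • v with hudef
    -- facts about D
    have hDm := Dmom hC₁ hmom
    obtain ⟨_, hD2i, _, hD2b⟩ := quartic hD hDm.1 hDm.2
    -- facts about S_w
    obtain ⟨hw2i, hw2b⟩ := sqPart hC₁ hX hmom w
    have hw2nn : (0:ℝ) ≤ ∫ ω, (linS X w ω)^2 ∂P :=
      integral_nonneg fun ω => sq_nonneg (linS X w ω)
    have hw2b' : ∫ ω, (linS X w ω)^2 ∂P ≤ 8 * C₁^3 := by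
      have h2 : ‖w‖^2 ≤ 4*C₁^2 := by nlinarith [norm_nonneg w]
      nlinarith [h2, hC₁]
    -- facts about S_u
    obtain ⟨hu2i, hu2b⟩ := sqPart hC₁ hX hmom u
    rw [hu1] at hu2b
    have hlin : linS X v = fun ω => ‖v‖ * linS X u ω := by
      conv_lhs => rw [hvu]
      rw [linS_smul]
    -- dominating function
    set G : Ω → ℝ := fun ω => ‖v‖/2 * (2*(D ω)^2 + 2*(linS X w ω)^2 + (linS X u ω)^2) with hG
    have hGi : Integrable G P := by
      refine Integrable.const_mul ?_ _
      exact ((hD2i.const_mul 2).add (hw2i.const_mul 2)).add hu2i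
    have hbound : ∀ ω, |D ω - linS X w ω| * |linS X v ω| ≤ G ω := by
      intro ω
      rw [hlin]
      have h1 : |D ω - linS X w ω| * |‖v‖ * linS X u ω|
          = ‖v‖ * (|D ω - linS X w ω| * |linS X u ω|) := by
        rw [abs_mul, abs_of_nonneg (norm_nonneg v)]; ring
      rw [h1, hG]
      have h2 : |D ω - linS X w ω| * |linS X u ω|
          ≤ ((D ω - linS X w ω)^2 + (linS X u ω)^2) / 2 := by
        nlinarith [sq_nonneg (|D ω - linS X w ω| - |linS X u ω|),
          sq_abs (D ω - linS X w ω), sq_abs (linS X u ω)]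
      have h3 : (D ω - linS X w ω)^2 ≤ 2*(D ω)^2 + 2*(linS X w ω)^2 := by
        nlinarith [sq_nonneg (D ω + linS X w ω)]
      have h4 : (0:ℝ) ≤ ‖v‖ := norm_nonneg v
      calc ‖v‖ * (|D ω - linS X w ω| * |linS X u ω|)
          ≤ ‖v‖ * (((D ω - linS X w ω)^2 + (linS X u ω)^2) / 2) :=
            mul_le_mul_of_nonneg_left h2 h4
        _ ≤ ‖v‖/2 * (2*(D ω)^2 + 2*(linS X w ω)^2 + (linS X u ω)^2) := by nlinarith
    have hmeas : AEStronglyMeasurable (fun ω => |D ω - linS X w ω| * |linS X v ω|) P :=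
      (((hD.sub (linS_meas hX w)).abs).mul ((linS_meas hX v).abs)).aestronglyMeasurable
    have hi : Integrable (fun ω => |D ω - linS X w ω| * |linS X v ω|) P := by
      refine hGi.mono' hmeas (Filter.Eventually.of_forall fun ω => ?_)
      rw [Real.norm_eq_abs, abs_of_nonneg (mul_nonneg (abs_nonneg _) (abs_nonneg _))]
      exact hbound ω
    refine ⟨hi, ?_⟩
    calc ∫ ω, |D ω - linS X w ω| * |linS X v ω| ∂P ≤ ∫ ω, G ω ∂P :=
          integral_mono_of_nonneg
            (Filter.Eventually.of_forall fun ω => mul_nonneg (abs_nonneg _) (abs_nonneg _))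
            hGi (Filter.Eventually.of_forall fun ω => hbound ω)
      _ ≤ 11 * C₁^3 * ‖v‖ := by
          rw [hG]
          rw [integral_const_mul]
          have hf1 : Integrable (fun ω => 2*(D ω)^2) P := hD2i.const_mul 2
          have hf2 : Integrable (fun ω => 2*(linS X w ω)^2) P := hw2i.const_mul 2
          have hf12 : Integrable (fun ω => 2*(D ω)^2 + 2*(linS X w ω)^2) P := hf1.add hf2
          have hsplit : ∫ ω, (2*(D ω)^2 + 2*(linS X w ω)^2 + (linS X u ω)^2) ∂P
              = 2 * ∫ ω, (D ω)^2 ∂P + 2 * ∫ ω, (linS X w ω)^2 ∂P + ∫ ω, (linS X u ω)^2 ∂P := by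
            rw [integral_add hf12 hu2i, integral_add hf1 hf2,
              integral_const_mul, integral_const_mul]
          rw [hsplit]
          have hDnn : (0:ℝ) ≤ ∫ ω, (D ω)^2 ∂P := integral_nonneg fun ω => sq_nonneg (D ω)
          have hc3 : C₁ ≤ C₁^3 := by
            simpa using pow_le_pow_right₀ hC₁ (by norm_num : 1 ≤ 3)
          have hc1 : (1:ℝ) ≤ C₁^3 := by
            calc (1:ℝ) = 1^3 := by norm_num
              _ ≤ C₁^3 := pow_le_pow_left₀ zero_le_one hC₁ 3
          have hS : 2 * ∫ ω, (D ω)^2 ∂P + 2 * ∫ ω, (linS X w ω)^2 ∂P + ∫ ω, (linS X u ω)^2 ∂P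
              ≤ 22*C₁^3 := by linarith [hu2b, hw2b', hD2b]
          calc ‖v‖/2 * (2 * ∫ ω, (D ω)^2 ∂P + 2 * ∫ ω, (linS X w ω)^2 ∂P
                + ∫ ω, (linS X u ω)^2 ∂P)
              ≤ ‖v‖/2 * (22*C₁^3) :=
                mul_le_mul_of_nonneg_left hS (by positivity)
            _ = 11 * C₁^3 * ‖v‖ := by ring

end Aux

/-- Bound on the Gateaux derivative of the expected logistic score along the nuisance
path: |E[g_r]| ≤ C(‖β−β₀‖ + ‖γ−γ₀‖) with C depending only on C₁. -/
theorem logit_score_gateaux_derivative_bound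
    {Ω : Type*} [MeasurableSpace Ω] (P : Measure Ω) [IsProbabilityMeasure P]
    {p : ℕ} (Y D : Ω → ℝ) (X : Ω → EuclideanSpace ℝ (Fin p))
    (hY : Measurable Y) (hD : Measurable D) (hX : Measurable X)
    (θ₀ : ℝ) (β₀ γ₀ : EuclideanSpace ℝ (Fin p)) (C₁ : ℝ) (hC₁ : 1 ≤ C₁)
    (hYb : ∀ᵐ ω ∂P, 0 ≤ Y ω ∧ Y ω ≤ 1)
    (hmom : ∀ ξ : EuclideanSpace ℝ (Fin (p + 1)), ‖ξ‖ = 1 →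
      MemLp (fun ω => D ω * ξ 0 + ∑ l : Fin p, X ω l * ξ l.succ) 4 P ∧
      ∫ ω, (D ω * ξ 0 + ∑ l : Fin p, X ω l * ξ l.succ) ^ 4 ∂P ≤ C₁)
    (hγ₀ : ‖γ₀‖ ≤ C₁) :
    ∃ C : ℝ, 0 < C ∧ ∀ (θ : ℝ) (r : ℝ), r ∈ Set.Icc (0 : ℝ) 1 →
      ∀ β γ : EuclideanSpace ℝ (Fin p), ‖γ - γ₀‖ ≤ 1 →
      |∫ ω,
          (-(Y ω - logistic (D ω * θ + ∑ l, X ω l * (β₀ l + r * (β l - β₀ l)))) *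
            (∑ l, X ω l * (γ l - γ₀ l))
          - logisticDeriv (D ω * θ + ∑ l, X ω l * (β₀ l + r * (β l - β₀ l))) *
            (D ω - ∑ l, X ω l * (γ₀ l + r * (γ l - γ₀ l))) *
            (∑ l, X ω l * (β l - β₀ l))) ∂P|
        ≤ C * (‖β - β₀‖ + ‖γ - γ₀‖) := by
  have hC0 : (0:ℝ) < C₁ := by linarith
  refine ⟨11 * C₁^3, by positivity, ?_⟩
  intro θ r hr β γ hγ
  obtain ⟨hr0, hr1⟩ := hr
  -- rewrite the coordinate sums as linS applications
  have e1 : ∀ ω, (∑ l, X ω l * (γ l - γ₀ l)) = linS X (γ - γ₀) ω := fun ω => by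
    simp [linS, PiLp.sub_apply]
  have e2 : ∀ ω, (∑ l, X ω l * (γ₀ l + r * (γ l - γ₀ l)))
      = linS X (γ₀ + r • (γ - γ₀)) ω := fun ω => by
    simp [linS, PiLp.add_apply, PiLp.smul_apply, PiLp.sub_apply, smul_eq_mul]
  have e3 : ∀ ω, (∑ l, X ω l * (β l - β₀ l)) = linS X (β - β₀) ω := fun ω => by
    simp [linS, PiLp.sub_apply]
  simp only [e1, e2, e3]
  set w : EuclideanSpace ℝ (Fin p) := γ₀ + r • (γ - γ₀) with hwdef
  have hwnorm : ‖w‖ ≤ 2 * C₁ := by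
    calc ‖w‖ ≤ ‖γ₀‖ + ‖r • (γ - γ₀)‖ := norm_add_le _ _
      _ = ‖γ₀‖ + |r| * ‖γ - γ₀‖ := by rw [norm_smul, Real.norm_eq_abs]
      _ ≤ C₁ + 1 * 1 := by
          refine add_le_add hγ₀ (mul_le_mul ?_ hγ (norm_nonneg _) zero_le_one)
          rw [abs_of_nonneg hr0]; exact hr1
      _ ≤ 2 * C₁ := by linarith
  obtain ⟨habsi, habsb⟩ := absPart hC₁ hX hmom (γ - γ₀)
  obtain ⟨hprodi, hprodb⟩ := prodPart hC₁ hX hD hmom w (β - β₀) hwnorm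
  have hhint : Integrable (fun ω => |linS X (γ - γ₀) ω|
      + |D ω - linS X w ω| * |linS X (β - β₀) ω|) P := habsi.add hprodi
  -- pointwise a.e. bound
  have haebound : ∀ᵐ ω ∂P,
      |(-(Y ω - logistic (D ω * θ + ∑ l, X ω l * (β₀ l + r * (β l - β₀ l)))) *
          linS X (γ - γ₀) ω
        - logisticDeriv (D ω * θ + ∑ l, X ω l * (β₀ l + r * (β l - β₀ l))) *
          (D ω - linS X w ω) * linS X (β - β₀) ω)|
      ≤ |linS X (γ - γ₀) ω| + |D ω - linS X w ω| * |linS X (β - β₀) ω| := by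
    filter_upwards [hYb] with ω hω
    set t := D ω * θ + ∑ l, X ω l * (β₀ l + r * (β l - β₀ l))
    have h1 : |-(Y ω - logistic t)| ≤ 1 := by
      rw [abs_neg, abs_le]
      constructor <;> nlinarith [logistic_pos t, logistic_lt_one t, hω.1, hω.2]
    have h2 := logisticDeriv_abs_le t
    calc |(-(Y ω - logistic t)) * linS X (γ - γ₀) ω
          - logisticDeriv t * (D ω - linS X w ω) * linS X (β - β₀) ω|
        ≤ |(-(Y ω - logistic t)) * linS X (γ - γ₀) ω|
          + |logisticDeriv t * (D ω - linS X w ω) * linS X (β - β₀) ω| := abs_sub _ _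
      _ ≤ |linS X (γ - γ₀) ω| + |D ω - linS X w ω| * |linS X (β - β₀) ω| := by
          rw [abs_mul, abs_mul, abs_mul]
          refine add_le_add ?_ ?_
          · exact mul_le_of_le_one_left (abs_nonneg _) h1
          · exact mul_le_mul_of_nonneg_right
              (mul_le_of_le_one_left (abs_nonneg _) h2) (abs_nonneg _)
  -- main estimate
  calc |∫ ω,
        (-(Y ω - logistic (D ω * θ + ∑ l, X ω l * (β₀ l + r * (β l - β₀ l)))) *
          linS X (γ - γ₀) ω
        - logisticDeriv (D ω * θ + ∑ l, X ω l * (β₀ l + r * (β l - β₀ l))) *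
          (D ω - linS X w ω) * linS X (β - β₀) ω) ∂P|
      ≤ ∫ ω, |(-(Y ω - logistic (D ω * θ + ∑ l, X ω l * (β₀ l + r * (β l - β₀ l)))) *
          linS X (γ - γ₀) ω
        - logisticDeriv (D ω * θ + ∑ l, X ω l * (β₀ l + r * (β l - β₀ l))) *
          (D ω - linS X w ω) * linS X (β - β₀) ω)| ∂P := by
        have h := norm_integral_le_integral_norm (μ := P)
          (f := fun ω =>
            (-(Y ω - logistic (D ω * θ + ∑ l, X ω l * (β₀ l + r * (β l - β₀ l)))) *
              linS X (γ - γ₀) ω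
            - logisticDeriv (D ω * θ + ∑ l, X ω l * (β₀ l + r * (β l - β₀ l))) *
              (D ω - linS X w ω) * linS X (β - β₀) ω))
        simpa [Real.norm_eq_abs] using h
    _ ≤ ∫ ω, (|linS X (γ - γ₀) ω| + |D ω - linS X w ω| * |linS X (β - β₀) ω|) ∂P :=
        integral_mono_of_nonneg (Filter.Eventually.of_forall fun ω => abs_nonneg _)
          hhint haebound
    _ = (∫ ω, |linS X (γ - γ₀) ω| ∂P)
        + ∫ ω, |D ω - linS X w ω| * |linS X (β - β₀) ω| ∂P := integral_add habsi hprodi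
    _ ≤ 2 * C₁ * ‖γ - γ₀‖ + 11 * C₁^3 * ‖β - β₀‖ := add_le_add habsb hprodb
    _ ≤ 11 * C₁^3 * (‖β - β₀‖ + ‖γ - γ₀‖) := by
        have hc3 : C₁ ≤ C₁^3 := by
          simpa using pow_le_pow_right₀ hC₁ (by norm_num : 1 ≤ 3)
        nlinarith [norm_nonneg (γ - γ₀), norm_nonneg (β - β₀)]
end
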